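/- arXiv:0809.1046 — 7 statements merged into one kernel-verified Lean document; each statement's English description precedes it below -/
import Mathlib

section
/- Let q, w be complex numbers with 0 < |q| < 1 and w ≠ 0. Then ∏_{n=0}^∞ (1 + w q^n)(1 + w^{−1} q^n) = (1/φ(q)) · Σ_{n∈ℤ} w^n ( q^{n(n+1)/2} + q^{n(n−1)/2} ), where the infinite product converges and the bilateral series converges absolutely. -/
open Filter Finset

namespace JTP

noncomputable def qp (q : ℂ) (N : ℕ) : ℂ := ∏ i ∈ Finset.range N, (1 - q ^ (i+1))

noncomputable def gb (q : ℂ) (m j : ℕ) : ℂ :=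
  if j ≤ m then qp q m / (qp q j * qp q (m-j)) else 0

variable {q w : ℂ}



/-- partial products of the Euler function -/


lemma one_sub_pow_ne (hq1 : ‖q‖ < 1) (i : ℕ) : 1 - q ^ (i+1) ≠ 0 := by
  intro h
  have h1 : q ^ (i+1) = 1 := by linear_combination -h
  have : ‖q ^ (i+1)‖ < 1 := by
    rw [norm_pow]
    exact pow_lt_one₀ (norm_nonneg q) hq1 (Nat.succ_ne_zero i)
  rw [h1, norm_one] at this
  exact lt_irrefl 1 this

lemma qp_ne_zero (hq1 : ‖q‖ < 1) (N : ℕ) : qp q N ≠ 0 :=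
  Finset.prod_ne_zero_iff.2 fun i _ => one_sub_pow_ne hq1 i

lemma tendsto_pow_succ (hq1 : ‖q‖ < 1) :
    Tendsto (fun n : ℕ => ‖q‖ ^ (n+1)) atTop (nhds 0) :=
by
  have h := (tendsto_pow_atTop_nhds_zero_of_lt_one (norm_nonneg q) hq1).const_mul ‖q‖
  rw [mul_zero] at h
  exact h.congr fun n => by rw [pow_succ, mul_comm]

lemma summable_pow_succ (hq1 : ‖q‖ < 1) : Summable fun n : ℕ => ‖q‖ ^ (n+1) :=
  ((summable_geometric_of_lt_one (norm_nonneg q) hq1).mul_left ‖q‖).congr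
    fun n => by rw [pow_succ, mul_comm]

lemma summable_log (hq1 : ‖q‖ < 1) :
    Summable fun n : ℕ => Complex.log (1 - q ^ (n+1)) := by
  have h0 : Summable fun n : ℕ => (3/2 : ℝ) * ‖q‖ ^ (n+1) :=
    (summable_pow_succ hq1).mul_left _
  apply Summable.of_norm_bounded_eventually h0
  have hhalf : ∀ᶠ n : ℕ in atTop, ‖q‖ ^ (n+1) ≤ 1/2 :=
    (tendsto_pow_succ hq1).eventually_le_const (by norm_num : (0:ℝ) < 1/2)
  rw [Nat.cofinite_eq_atTop]
  filter_upwards [hhalf] with n hn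
  have h2 : (1 : ℂ) - q ^ (n+1) = 1 + -(q^(n+1)) := by ring
  rw [h2]
  calc ‖Complex.log (1 + -(q^(n+1)))‖
      ≤ 3/2 * ‖-(q^(n+1))‖ := Complex.norm_log_one_add_half_le_self (by
        rwa [norm_neg, norm_pow])
    _ = 3/2 * ‖q‖^(n+1) := by rw [norm_neg, norm_pow]

-- from p1 (assumed): one_sub_pow_ne, summable_log

lemma multipliable_euler (hq1 : ‖q‖ < 1) : Multipliable fun n : ℕ => 1 - q ^ (n+1) :=
  Complex.multipliable_of_summable_log (summable_log hq1)

lemma euler_ne_zero (hq1 : ‖q‖ < 1) : (∏' n : ℕ, (1 - q ^ (n+1))) ≠ 0 := by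
  have h := Complex.cexp_tsum_eq_tprod (fun n => one_sub_pow_ne hq1 n) (summable_log hq1)
  rw [← h]
  exact Complex.exp_ne_zero _

lemma tendsto_qp (hq1 : ‖q‖ < 1) :
    Tendsto (fun N => ∏ i ∈ range N, (1 - q ^ (i+1))) atTop
      (nhds (∏' n : ℕ, (1 - q ^ (n+1)))) :=
  (multipliable_euler hq1).hasProd.tendsto_prod_nat




lemma qp_zero : qp q 0 = 1 := by simp [qp]

lemma qp_succ (N : ℕ) : qp q (N+1) = qp q N * (1 - q ^ (N+1)) := by
  simp [qp, Finset.prod_range_succ]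

lemma gb_zero (hq1 : ‖q‖ < 1) (m : ℕ) : gb q m 0 = 1 := by
  simp [gb, qp_zero, div_self (qp_ne_zero hq1 m)]

lemma gb_self (hq1 : ‖q‖ < 1) (m : ℕ) : gb q m m = 1 := by
  simp [gb, qp_zero, div_self (qp_ne_zero hq1 m)]

lemma gb_of_gt {m j : ℕ} (h : m < j) : gb q m j = 0 := by
  simp [gb, Nat.not_le.2 h]

lemma pascal (hq1 : ‖q‖ < 1) (m j : ℕ) (hj : j ≤ m) :
    gb q (m+1) (j+1) = gb q m (j+1) + q^(m-j) * gb q m j := by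
  rcases eq_or_lt_of_le hj with rfl | hlt
  · rw [gb_self hq1, gb_of_gt (Nat.lt_succ_self j), gb_self hq1]
    simp
  · -- j < m, write m = j + c + 1
    obtain ⟨c, rfl⟩ : ∃ c, m = j + c + 1 := ⟨m - j - 1, by omega⟩
    have h1 : j + 1 ≤ j + c + 1 := by omega
    have h2 : j ≤ j + c + 1 := by omega
    have h3 : j + 1 ≤ j + c + 2 := by omega
    rw [gb, gb, gb, if_pos h1, if_pos h2, if_pos h3]
    have e1 : j + c + 1 + 1 - (j + 1) = c + 1 := by omega
    have e2 : j + c + 1 - (j + 1) = c := by omega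
    have e3 : j + c + 1 - j = c + 1 := by omega
    rw [e1, e2, e3]
    have hqpm : qp q (j + c + 1 + 1) = qp q (j+c+1) * (1 - q^(j+c+2)) := by
      rw [qp_succ]
    have hqpc : qp q (c+1) = qp q c * (1 - q^(c+1)) := qp_succ c
    have hqpj : qp q (j+1) = qp q j * (1 - q^(j+1)) := qp_succ j
    have hs : q^(j+c+2) = q^(c+1) * q^(j+1) := by
      rw [← pow_add]; congr 1; omega
    rw [hqpm, hqpc, hqpj, hs]
    have n1 := qp_ne_zero hq1 (j+c+1)
    have n2 := qp_ne_zero hq1 c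
    have n3 := qp_ne_zero hq1 j
    have n4 := one_sub_pow_ne hq1 c
    have n5 := one_sub_pow_ne hq1 j
    field_simp
    ring

theorem qbinom (hq1 : ‖q‖ < 1) (m : ℕ) (z : ℂ) :
    ∏ k ∈ range m, (1 + z * q^k) =
      ∑ j ∈ range (m+1), q^(∑ i ∈ range j, i) * gb q m j * z^j := by
  induction m with
  | zero => simp [gb_zero hq1]
  | succ m ih =>
    rw [prod_range_succ, ih]
    have hA : ∑ j ∈ range (m+1+1), q^(∑ i ∈ range j, i) * gb q m j * z^j
        = ∑ j ∈ range (m+1), q^(∑ i ∈ range j, i) * gb q m j * z^j := by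
      rw [sum_range_succ, gb_of_gt (Nat.lt_succ_self m)]
      ring
    have key : ∑ j ∈ range (m+1+1), q^(∑ i ∈ range j, i) * gb q (m+1) j * z^j
        = (∑ j ∈ range (m+1+1), q^(∑ i ∈ range j, i) * gb q m j * z^j)
          + ∑ j ∈ range (m+1), q^(∑ i ∈ range j, i) * gb q m j * z^j * (z * q^m) := by
      rw [sum_range_succ' (fun j => q^(∑ i ∈ range j, i) * gb q (m+1) j * z^j) (m+1),
          sum_range_succ' (fun j => q^(∑ i ∈ range j, i) * gb q m j * z^j) (m+1)]
      simp only [gb_zero hq1]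
      rw [add_assoc (∑ k ∈ range (m+1), q^(∑ i ∈ range (k+1), i) * gb q m (k+1) * z^(k+1)),
          add_comm ((q ^ ∑ i ∈ range 0, i) * 1 * z ^ 0), ← add_assoc, ← sum_add_distrib]
      congr 1
      apply sum_congr rfl
      intro j hj
      have hjm : j ≤ m := by simpa [Nat.lt_succ_iff] using hj
      rw [pascal hq1 m j hjm]
      have hE : (∑ i ∈ range (j+1), i) = (∑ i ∈ range j, i) + j := sum_range_succ _ _
      rw [hE]
      have hpow : q ^ ((∑ i ∈ range j, i) + j) * q^(m-j) = q ^ (∑ i ∈ range j, i) * q^m := by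
        rw [← pow_add, ← pow_add]
        congr 1
        omega
      calc q ^ ((∑ i ∈ range j, i) + j) * (gb q m (j+1) + q^(m-j) * gb q m j) * z^(j+1)
          = q ^ ((∑ i ∈ range j, i) + j) * gb q m (j+1) * z^(j+1)
            + (q ^ ((∑ i ∈ range j, i) + j) * q^(m-j)) * gb q m j * z^(j+1) := by ring
        _ = _ := by rw [hpow]; ring
    rw [key, hA, mul_add, mul_one]
    congr 1
    exact Finset.sum_mul _ _ _

lemma prod_pairs (hq : q ≠ 0) (hw : w ≠ 0) (M : ℕ) :
    ∏ n ∈ range (M+1), ((1 + w*q^n) * (1 + w⁻¹*q^n))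
      = (1+w) * (w^(M+1))⁻¹ * q^(∑ i ∈ range (M+1), i)
        * ∏ k ∈ range (2*M+1), (1 + (w * (q^M)⁻¹) * q^k) := by
  induction M with
  | zero =>
    norm_num [prod_range_one, sum_range_one]
    have h : (1 + w⁻¹) = w⁻¹ * (1 + w) := by field_simp; ring
    rw [h]
    ring
  | succ M ih =>
    rw [prod_range_succ, ih]
    have hA : ∏ k ∈ range (2*(M+1)+1), (1 + (w * (q^(M+1))⁻¹) * q^k)
        = ((∏ k ∈ range (2*M+1), (1 + (w * (q^M)⁻¹) * q^k))
            * (1 + w*(q^M)⁻¹*q^(2*M+1))) * (1 + w*(q^(M+1))⁻¹) := by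
      have h1 : 2*(M+1)+1 = (2*M+2)+1 := by ring
      rw [h1, prod_range_succ' (fun k => 1 + (w * (q^(M+1))⁻¹) * q^k) (2*M+2)]
      have h2 : ∀ k, 1 + (w * (q^(M+1))⁻¹) * q^(k+1) = 1 + (w * (q^M)⁻¹) * q^k := by
        intro k
        congr 1
        rw [pow_succ, pow_succ]
        field_simp
      rw [prod_congr rfl (fun k _ => h2 k), prod_range_succ]
      simp
    rw [hA, sum_range_succ _ (M+1), pow_add]
    have h3 : (q:ℂ)^(2*M+1) = q^M * q^(M+1) := by rw [← pow_add]; congr 1; omega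
    rw [h3]
    generalize (∑ i ∈ range (M+1), i) = E
    generalize (∏ k ∈ range (2*M+1), (1 + w * (q^M)⁻¹ * q^k)) = P
    have hwne : w^(M+1) ≠ 0 := pow_ne_zero _ hw
    have hwne2 : w^(M+1+1) ≠ 0 := pow_ne_zero _ hw
    have hqne : (q:ℂ)^(M+1) ≠ 0 := pow_ne_zero _ hq
    have hqMne : (q:ℂ)^M ≠ 0 := pow_ne_zero _ hq
    field_simp
    ring



noncomputable def sC (q : ℂ) (i : ℕ) : ℝ := 2*‖q‖^(i+1)/(1-‖q‖^(i+1))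

lemma pow_succ_lt_one (hq1 : ‖q‖ < 1) (i : ℕ) : ‖q‖^(i+1) < 1 :=
  pow_lt_one₀ (norm_nonneg q) hq1 (Nat.succ_ne_zero i)

lemma sC_nonneg (hq1 : ‖q‖ < 1) (i : ℕ) : 0 ≤ sC q i := by
  apply div_nonneg (by positivity)
  linarith [pow_succ_lt_one hq1 i]

lemma sC_summable (hq1 : ‖q‖ < 1) : Summable (sC q) := by
  have hb : Summable (fun i : ℕ => (2/(1-‖q‖)) * ‖q‖^(i+1)) := by
    apply Summable.mul_left
    exact ((summable_geometric_of_lt_one (norm_nonneg q) hq1).mul_left ‖q‖).congr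
      fun n => by rw [pow_succ, mul_comm]
  apply Summable.of_nonneg_of_le (sC_nonneg hq1) _ hb
  intro i
  have h1 : ‖q‖^(i+1) ≤ ‖q‖ := by
    calc ‖q‖^(i+1) ≤ ‖q‖^1 := pow_le_pow_of_le_one (norm_nonneg q) hq1.le (by omega)
    _ = ‖q‖ := pow_one _
  calc sC q i ≤ 2*‖q‖^(i+1)/(1-‖q‖) :=
        div_le_div₀ (by positivity) le_rfl (by linarith) (by linarith)
    _ = 2/(1-‖q‖) * ‖q‖^(i+1) := by ring

noncomputable def Cgb (q : ℂ) : ℝ := Real.exp (∑' i : ℕ, sC q i)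

lemma Cgb_nonneg (hq1 : ‖q‖ < 1) : 0 ≤ Cgb q := (Real.exp_pos _).le

lemma gb_prod_formula (hq1 : ‖q‖ < 1) {m j : ℕ} (hj : j ≤ m) :
    gb q m j = ∏ i ∈ range j, ((1 - q^(m-j+i+1))/(1 - q^(i+1))) := by
  rw [gb, if_pos hj]
  have hm : m = (m - j) + j := by omega
  have hqp : qp q m = qp q (m-j) * ∏ i ∈ range j, (1 - q^(m-j+i+1)) := by
    conv_lhs => rw [qp, hm, Finset.prod_range_add]
    rfl
  rw [hqp, prod_div_distrib]
  have hqpj : qp q j = ∏ i ∈ range j, (1 - q^(i+1)) := rfl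
  rw [← hqpj]
  field_simp [qp_ne_zero hq1 j, qp_ne_zero hq1 (m-j)]

lemma gb_norm_le (hq1 : ‖q‖ < 1) (m j : ℕ) : ‖gb q m j‖ ≤ Cgb q := by
  have hCpos : (0:ℝ) ≤ Cgb q := (Real.exp_pos _).le
  by_cases hj : j ≤ m
  · rw [gb_prod_formula hq1 hj, norm_prod]
    calc ∏ i ∈ range j, ‖(1 - q^(m-j+i+1))/(1 - q^(i+1))‖
        ≤ ∏ i ∈ range j, Real.exp (sC q i) := by
          apply Finset.prod_le_prod (fun i _ => norm_nonneg _)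
          intro i _
          have h1 : ‖(1:ℂ) - q^(m-j+i+1)‖ ≤ 1 + ‖q‖^(i+1) := by
            calc ‖(1:ℂ) - q^(m-j+i+1)‖ ≤ ‖(1:ℂ)‖ + ‖q^(m-j+i+1)‖ := norm_sub_le _ _
            _ = 1 + ‖q‖^(m-j+i+1) := by rw [norm_one, norm_pow]
            _ ≤ 1 + ‖q‖^(i+1) := by
                have := pow_le_pow_of_le_one (norm_nonneg q) hq1.le
                  (show i+1 ≤ m-j+i+1 by omega)
                linarith
          have h2 : 1 - ‖q‖^(i+1) ≤ ‖(1:ℂ) - q^(i+1)‖ := by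
            have := norm_sub_norm_le (1:ℂ) (q^(i+1))
            rw [norm_one, norm_pow] at this
            linarith
          have hpos : (0:ℝ) < 1 - ‖q‖^(i+1) := by linarith [pow_succ_lt_one hq1 i]
          rw [norm_div]
          calc ‖(1:ℂ) - q^(m-j+i+1)‖ / ‖(1:ℂ) - q^(i+1)‖
              ≤ (1 + ‖q‖^(i+1)) / (1 - ‖q‖^(i+1)) := by
                apply div_le_div₀ (by positivity) h1 hpos h2
            _ = 1 + sC q i := by
                have hne : (1:ℝ) - ‖q‖^(i+1) ≠ 0 := hpos.ne'
                rw [sC, show (1:ℝ) + ‖q‖^(i+1) = (1 - ‖q‖^(i+1)) + 2*‖q‖^(i+1) by ring,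
                  add_div, div_self hne]
            _ ≤ Real.exp (sC q i) := by
                have := Real.add_one_le_exp (sC q i)
                linarith
      _ = Real.exp (∑ i ∈ range j, sC q i) := (Real.exp_sum _ _).symm
      _ ≤ Cgb q := by
          rw [Cgb, Real.exp_le_exp]
          exact (sC_summable hq1).sum_le_tsum _ (fun i _ => sC_nonneg hq1 i)
  · rw [gb, if_neg hj]
    simpa using hCpos

lemma summable_aux (hq : q ≠ 0) (hq1 : ‖q‖ < 1) {b : ℂ} (hb : b ≠ 0) {e : ℕ → ℕ}
    (he : ∀ n, ∃ k, n ≤ k ∧ e (n+1) = e n + k) :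
    Summable (fun n : ℕ => ‖b‖^n * ‖q‖^(e n)) := by
  have hρpos : 0 < ‖q‖ := norm_pos_iff.2 hq
  have hbpos : 0 < ‖b‖ := norm_pos_iff.2 hb
  apply summable_of_ratio_norm_eventually_le (show (1:ℝ)/2 < 1 by norm_num)
  have hten : Tendsto (fun n : ℕ => ‖b‖ * ‖q‖^n) atTop (nhds 0) := by
    have h := (tendsto_pow_atTop_nhds_zero_of_lt_one (norm_nonneg q) hq1).const_mul ‖b‖
    rwa [mul_zero] at h
  filter_upwards [hten.eventually_le_const (show (0:ℝ) < 1/2 by norm_num)] with n hn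
  obtain ⟨k, hk, hek⟩ := he n
  have h1 : ‖b‖^(n+1) * ‖q‖^(e (n+1)) = (‖b‖ * ‖q‖^k) * (‖b‖^n * ‖q‖^(e n)) := by
    rw [hek, pow_add, pow_succ]
    ring
  have h2 : ‖b‖ * ‖q‖^k ≤ ‖b‖ * ‖q‖^n :=
    mul_le_mul_of_nonneg_left (pow_le_pow_of_le_one (norm_nonneg q) hq1.le hk) (norm_nonneg b)
  have h3 : (0:ℝ) ≤ ‖b‖^n * ‖q‖^(e n) := by positivity
  rw [Real.norm_of_nonneg (by positivity), Real.norm_of_nonneg h3, h1]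
  nlinarith

lemma exp_plus_cast (n : ℕ) : ((n:ℤ)*((n:ℤ)+1)/2) = ((n*(n+1)/2 : ℕ) : ℤ) := by
  have hu : 2 ∣ n*(n+1) := (Nat.even_mul_succ_self n).two_dvd
  rw [show ((n:ℤ)*((n:ℤ)+1)) = ((n*(n+1) : ℕ) : ℤ) by push_cast; ring]
  omega

lemma exp_minus_cast (n : ℕ) : ((-(n:ℤ))*(-(n:ℤ)+1)/2) = ((n*(n-1)/2 : ℕ) : ℤ) := by
  have hu : 2 ∣ n*(n-1) := by
    rcases n with _ | m
    · simp
    · simp only [Nat.add_sub_cancel]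
      rw [mul_comm]
      exact (Nat.even_mul_succ_self m).two_dvd
  have hc : ((-(n:ℤ))*(-(n:ℤ)+1)) = ((n*(n-1) : ℕ) : ℤ) := by
    rcases n with _ | m
    · simp
    · simp only [Nat.add_sub_cancel]
      push_cast
      ring
  rw [hc]
  omega

lemma summable_plus (hq : q ≠ 0) (hq1 : ‖q‖ < 1) (hw : w ≠ 0) :
    Summable (fun n : ℤ => ‖w ^ n * q ^ (n*(n+1)/2)‖) := by
  apply Summable.of_nat_of_neg
  · have he : ∀ n : ℕ, ∃ k, n ≤ k ∧ (n+1)*((n+1)+1)/2 = n*(n+1)/2 + k := by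
      intro n
      refine ⟨n+1, by omega, ?_⟩
      have h2 : (n+1)*((n+1)+1) = n*(n+1) + 2*(n+1) := by ring
      have h3 : 2 ∣ n*(n+1) := (Nat.even_mul_succ_self n).two_dvd
      omega
    apply (summable_aux hq hq1 hw (e := fun n => n*(n+1)/2) he).congr
    intro n
    rw [norm_mul, exp_plus_cast, zpow_natCast, zpow_natCast, norm_pow, norm_pow]
  · have he : ∀ n : ℕ, ∃ k, n ≤ k ∧ (n+1)*((n+1)-1)/2 = n*(n-1)/2 + k := by
      intro n
      refine ⟨n, le_refl n, ?_⟩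
      rcases n with _ | m
      · simp
      · have h2 : (m+1+1)*((m+1+1)-1) = (m+1)*((m+1)-1) + 2*(m+1) := by
          simp only [Nat.add_sub_cancel]
          ring
        have h3 : 2 ∣ (m+1)*((m+1)-1) := by
          simp only [Nat.add_sub_cancel]
          rw [mul_comm]
          exact (Nat.even_mul_succ_self m).two_dvd
        omega
    apply (summable_aux hq hq1 (inv_ne_zero hw) (e := fun n => n*(n-1)/2) he).congr
    intro n
    simp only [norm_mul, zpow_neg, zpow_natCast, norm_inv, norm_pow, inv_pow]
    congr 1
    rw [show ((-(n:ℤ))*(-(n:ℤ)+1)) = -((n:ℤ) * (-(n:ℤ) + 1)) by ring] at *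
    rw [show (-((n:ℤ) * (-(n:ℤ) + 1))) = (-(n:ℤ))*(-(n:ℤ)+1) by ring, exp_minus_cast,
      zpow_natCast]
    rw [norm_pow]

lemma summable_minus (hq : q ≠ 0) (hq1 : ‖q‖ < 1) (hw : w ≠ 0) :
    Summable (fun n : ℤ => ‖w ^ n * q ^ (n*(n-1)/2)‖) := by
  have h := summable_plus hq hq1 (inv_ne_zero hw)
  have h2 := (Equiv.neg ℤ).summable_iff.2 h
  apply h2.congr
  intro n
  simp only [Equiv.neg_apply, Function.comp_apply]
  have ha : w⁻¹ ^ (-n) = w ^ n := by rw [zpow_neg, inv_zpow, inv_inv]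
  have hb : (-n)*((-n)+1)/2 = n*(n-1)/2 := by
    rw [show (-n)*((-n)+1) = n*(n-1) by ring]
  rw [ha, hb]




lemma gauss_int (j : ℕ) : ((∑ i ∈ range j, i : ℕ) : ℤ) * 2 = (j:ℤ)*((j:ℤ)-1) := by
  induction j with
  | zero => simp
  | succ n ih =>
    rw [sum_range_succ]
    push_cast at *
    linarith

/-- summand kernel -/
noncomputable def FF (q w : ℂ) (M : ℕ) (m : ℤ) : ℂ :=
  if -(M:ℤ)-1 ≤ m ∧ m ≤ M then
    (1+w) * w^m * q^(m*(m+1)/2) * gb q (2*M+1) (m+M+1).toNat else 0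

lemma partial_eq_tsum (hq : q ≠ 0) (hq1 : ‖q‖ < 1) (hw : w ≠ 0) (M : ℕ) :
    ∏ n ∈ range (M+1), ((1 + w*q^n) * (1 + w⁻¹*q^n)) = ∑' m : ℤ, FF q w M m := by
  have hsupp : ∀ m : ℤ, m ∉ Finset.Icc (-(M:ℤ)-1) (M:ℤ) → FF q w M m = 0 := by
    intro m hm
    rw [Finset.mem_Icc] at hm
    rw [FF, if_neg (by omega)]
  rw [tsum_eq_sum hsupp]
  -- reindex Icc to range
  have hre : ∑ m ∈ Finset.Icc (-(M:ℤ)-1) (M:ℤ), FF q w M m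
      = ∑ j ∈ range (2*M+2), FF q w M ((j:ℤ) - M - 1) := by
    refine Finset.sum_nbij' (fun m : ℤ => (m + M + 1).toNat) (fun j : ℕ => (j:ℤ) - M - 1)
      ?_ ?_ ?_ ?_ ?_
    · intro m hm; rw [Finset.mem_Icc] at hm; rw [Finset.mem_range]; omega
    · intro j hj; rw [Finset.mem_range] at hj; rw [Finset.mem_Icc]; omega
    · intro m hm; rw [Finset.mem_Icc] at hm; omega
    · intro j hj; rw [Finset.mem_range] at hj; omega
    · intro m hm; rw [Finset.mem_Icc] at hm
      congr 1
      omega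
  rw [hre, prod_pairs hq hw M, qbinom hq1 (2*M+1) (w * (q^M)⁻¹), Finset.mul_sum]
  have h2M : 2*M+1+1 = 2*M+2 := by omega
  rw [h2M]
  apply Finset.sum_congr rfl
  intro j hj
  rw [Finset.mem_range] at hj
  rw [FF, if_pos (by omega)]
  have htn : (((j:ℤ) - M - 1) + M + 1).toNat = j := by omega
  rw [htn]
  -- now pure algebra of powers
  have hwj : w^((j:ℤ) - M - 1) = w^(j:ℕ) * (w^(M+1))⁻¹ := by
    rw [show (j:ℤ) - M - 1 = (j:ℤ) - ((M+1:ℕ):ℤ) by push_cast; ring, zpow_sub₀ hw,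
      zpow_natCast, zpow_natCast, div_eq_mul_inv]
  have hqj : q^(((j:ℤ) - M - 1)*((j:ℤ) - M)/2)
      = q^((∑ i ∈ range (M+1), i : ℕ)) * q^((∑ i ∈ range j, i : ℕ)) * ((q^M)⁻¹)^j := by
    have hE1 := gauss_int (M+1)
    have hE2 := gauss_int j
    have hexp : ((j:ℤ) - M - 1)*((j:ℤ) - M)/2
        = ((∑ i ∈ range (M+1), i : ℕ) : ℤ) + ((∑ i ∈ range j, i : ℕ) : ℤ) - (M:ℤ)*j := by
      have hnum : ((j:ℤ) - M - 1)*((j:ℤ) - M)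
          = 2 * (((∑ i ∈ range (M+1), i : ℕ) : ℤ) + ((∑ i ∈ range j, i : ℕ) : ℤ) - (M:ℤ)*j) := by
        push_cast at hE1 hE2 ⊢
        linear_combination -hE1 - hE2
      rw [hnum, Int.mul_ediv_cancel_left _ (by norm_num)]
    rw [hexp]
    rw [zpow_sub₀ hq, zpow_add₀ hq, zpow_natCast, zpow_natCast, div_eq_mul_inv]
    congr 1
    rw [show (M:ℤ)*(j:ℤ) = ((M*j : ℕ) : ℤ) by push_cast; ring, zpow_natCast]
    rw [inv_pow, pow_mul]
  rw [show ((j:ℤ) - ↑M - 1) * ((j:ℤ) - ↑M - 1 + 1) = ((j:ℤ) - ↑M - 1) * ((j:ℤ) - ↑M) by ring]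
  rw [hwj, hqj]
  rw [mul_pow]
  ring

lemma FF_bound (hq1 : ‖q‖ < 1) (M : ℕ) (m : ℤ) :
    ‖FF q w M m‖ ≤ ‖1+w‖ * Cgb q * ‖w^m * q^(m*(m+1)/2)‖ := by
  rw [FF]
  split_ifs with h
  · rw [show (1+w) * w^m * q^(m*(m+1)/2) * gb q (2*M+1) (m+M+1).toNat
        = ((1+w) * (w^m * q^(m*(m+1)/2))) * gb q (2*M+1) (m+M+1).toNat by ring]
    rw [norm_mul, norm_mul]
    calc ‖1+w‖ * ‖w^m * q^(m*(m+1)/2)‖ * ‖gb q (2*M+1) (m+M+1).toNat‖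
        ≤ ‖1+w‖ * ‖w^m * q^(m*(m+1)/2)‖ * Cgb q := by
          apply mul_le_mul_of_nonneg_left (gb_norm_le hq1 _ _) (by positivity)
      _ = ‖1+w‖ * Cgb q * ‖w^m * q^(m*(m+1)/2)‖ := by ring
  · rw [norm_zero]
    exact mul_nonneg (mul_nonneg (norm_nonneg _) (Cgb_nonneg hq1)) (norm_nonneg _)

lemma FF_tendsto (hq : q ≠ 0) (hq1 : ‖q‖ < 1) (hw : w ≠ 0) (m : ℤ) :
    Tendsto (fun M : ℕ => FF q w M m) atTop
      (nhds ((1+w) * w^m * q^(m*(m+1)/2) * (∏' n : ℕ, (1 - q ^ (n+1)))⁻¹)) := by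
  set φ := ∏' n : ℕ, (1 - q ^ (n+1)) with hφ
  have hφne : φ ≠ 0 := euler_ne_zero hq1
  have hqpdef : ∀ N : ℕ, qp q N = ∏ i ∈ range N, (1 - q ^ (i+1)) := fun N => rfl
  -- three tendsto's
  have t1 : Tendsto (fun M : ℕ => qp q (2*M+1)) atTop (nhds φ) := by
    apply (tendsto_qp hq1).comp
    exact tendsto_atTop.2 fun b => eventually_atTop.2 ⟨b, fun M hM => by omega⟩
  have t2 : Tendsto (fun M : ℕ => qp q (m+M+1).toNat) atTop (nhds φ) := by
    apply (tendsto_qp hq1).comp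
    exact tendsto_atTop.2 fun b => eventually_atTop.2 ⟨b + m.natAbs, fun M hM => by omega⟩
  have t3 : Tendsto (fun M : ℕ => qp q ((M:ℤ)-m).toNat) atTop (nhds φ) := by
    apply (tendsto_qp hq1).comp
    exact tendsto_atTop.2 fun b => eventually_atTop.2 ⟨b + m.natAbs, fun M hM => by omega⟩
  have tdiv : Tendsto (fun M : ℕ => qp q (2*M+1) / (qp q (m+M+1).toNat * qp q ((M:ℤ)-m).toNat))
      atTop (nhds (φ / (φ * φ))) := t1.div (t2.mul t3) (mul_ne_zero hφne hφne)
  have hval : φ / (φ * φ) = φ⁻¹ := by field_simp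
  rw [hval] at tdiv
  have tmain := tdiv.const_mul ((1+w) * w^m * q^(m*(m+1)/2))
  apply tmain.congr'
  filter_upwards [eventually_ge_atTop (m.natAbs + 1)] with M hM
  have hcond : -(M:ℤ)-1 ≤ m ∧ m ≤ M := by omega
  rw [FF, if_pos hcond]
  have hle : (m+M+1).toNat ≤ 2*M+1 := by omega
  rw [gb, if_pos hle]
  have hsub : 2*M+1 - (m+M+1).toNat = ((M:ℤ)-m).toNat := by omega
  rw [hsub]

lemma exp_shift (m : ℤ) : (m+1)*((m+1)-1)/2 = m*(m+1)/2 := by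
  rw [show (m+1)*((m+1)-1) = m*(m+1) by ring]

theorem main (hq : q ≠ 0) (hq1 : ‖q‖ < 1) (hw : w ≠ 0) :
    Multipliable (fun n : ℕ => (1 + w * q ^ n) * (1 + w⁻¹ * q ^ n)) ∧
    Summable (fun n : ℤ => ‖w ^ n * (q ^ ((n * (n + 1)) / 2) + q ^ ((n * (n - 1)) / 2))‖) ∧
    (∏' n : ℕ, (1 + w * q ^ n) * (1 + w⁻¹ * q ^ n)) =
      (∏' n : ℕ, (1 - q ^ (n+1)))⁻¹ *
        ∑' n : ℤ, w ^ n * (q ^ ((n * (n + 1)) / 2) + q ^ ((n * (n - 1)) / 2)) := by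
  have hplus := summable_plus hq hq1 hw
  have hminus := summable_minus hq hq1 hw
  -- Multipliability
  have hmul : Multipliable (fun n : ℕ => (1 + w * q ^ n) * (1 + w⁻¹ * q ^ n)) := by
    by_cases hzero : ∀ n : ℕ, (1 + w * q ^ n) * (1 + w⁻¹ * q ^ n) ≠ 0
    · apply Complex.multipliable_of_summable_log
      have hexpand : ∀ n : ℕ, (1 + w * q^n) * (1 + w⁻¹ * q^n)
          = 1 + ((w + w⁻¹) * q^n + q^n * q^n) := by
        intro n
        have h1 : w * w⁻¹ = 1 := mul_inv_cancel₀ hw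
        linear_combination (q^n * q^n) * h1
      set c := ‖w + w⁻¹‖ + 1 with hc
      have hcpos : 0 < c := by positivity
      have hanorm : ∀ n : ℕ, ‖(w + w⁻¹) * q^n + q^n * q^n‖ ≤ c * ‖q‖^n := by
        intro n
        calc ‖(w + w⁻¹) * q^n + q^n * q^n‖ ≤ ‖(w + w⁻¹) * q^n‖ + ‖q^n * q^n‖ := norm_add_le _ _
          _ = ‖w + w⁻¹‖ * ‖q‖^n + ‖q‖^n * ‖q‖^n := by
              rw [norm_mul, norm_mul, norm_pow]
          _ ≤ ‖w + w⁻¹‖ * ‖q‖^n + 1 * ‖q‖^n := by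
              have h1 : ‖q‖^n ≤ 1 := pow_le_one₀ (norm_nonneg q) hq1.le
              have h2 : (0:ℝ) ≤ ‖q‖^n := by positivity
              nlinarith
          _ = c * ‖q‖^n := by rw [hc]; ring
      have hgs : Summable (fun n : ℕ => 3/2 * (c * ‖q‖^n)) :=
        ((summable_geometric_of_lt_one (norm_nonneg q) hq1).mul_left c).mul_left _
      apply Summable.of_norm_bounded_eventually hgs
      rw [Nat.cofinite_eq_atTop]
      have hten : Tendsto (fun n : ℕ => c * ‖q‖^n) atTop (nhds 0) := by
        have h := (tendsto_pow_atTop_nhds_zero_of_lt_one (norm_nonneg q) hq1).const_mul c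
        rwa [mul_zero] at h
      filter_upwards [hten.eventually_le_const (show (0:ℝ) < 1/2 by norm_num)] with n hn
      rw [hexpand n]
      calc ‖Complex.log (1 + ((w + w⁻¹) * q^n + q^n * q^n))‖
          ≤ 3/2 * ‖(w + w⁻¹) * q^n + q^n * q^n‖ :=
            Complex.norm_log_one_add_half_le_self (le_trans (hanorm n) hn)
        _ ≤ 3/2 * (c * ‖q‖^n) := by
            have := hanorm n
            linarith
    · push_neg at hzero
      obtain ⟨k, hk⟩ := hzero
      refine ⟨0, ?_⟩
      have hev : (fun s : Finset ℕ => ∏ i ∈ s, ((1 + w * q ^ i) * (1 + w⁻¹ * q ^ i)))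
          =ᶠ[atTop] (fun _ => (0:ℂ)) := by
        filter_upwards [eventually_ge_atTop ({k} : Finset ℕ)] with s hs
        exact Finset.prod_eq_zero (hs (Finset.mem_singleton_self k)) hk
      exact Tendsto.congr' hev.symm tendsto_const_nhds
  -- Summability of the stated series
  have hsummain : Summable
      (fun n : ℤ => ‖w ^ n * (q ^ ((n * (n + 1)) / 2) + q ^ ((n * (n - 1)) / 2))‖) := by
    apply Summable.of_nonneg_of_le (fun n => norm_nonneg _) _ (hplus.add hminus)
    intro n
    rw [mul_add]
    exact norm_add_le _ _
  refine ⟨hmul, hsummain, ?_⟩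
  -- the identity
  set φ := ∏' n : ℕ, (1 - q ^ (n+1)) with hφ
  have hφne : φ ≠ 0 := euler_ne_zero hq1
  have hbsum : Summable (fun m : ℤ => ‖1+w‖ * Cgb q * ‖w^m * q^(m*(m+1)/2)‖) :=
    hplus.mul_left _
  have ht2 : Tendsto (fun M : ℕ => ∑' m : ℤ, FF q w M m) atTop
      (nhds (∑' m : ℤ, (1+w) * w^m * q^(m*(m+1)/2) * φ⁻¹)) := by
    apply tendsto_tsum_of_dominated_convergence hbsum (fun m => FF_tendsto hq hq1 hw m)
    exact Eventually.of_forall (fun M m => FF_bound hq1 M m)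
  have ht1 : Tendsto (fun M : ℕ => ∑' m : ℤ, FF q w M m) atTop
      (nhds (∏' n : ℕ, (1 + w * q ^ n) * (1 + w⁻¹ * q ^ n))) := by
    have h0 := hmul.hasProd.tendsto_prod_nat
    have h1 : Tendsto (fun M : ℕ => ∏ n ∈ range (M+1), ((1 + w * q ^ n) * (1 + w⁻¹ * q ^ n)))
        atTop (nhds (∏' n : ℕ, (1 + w * q ^ n) * (1 + w⁻¹ * q ^ n))) :=
      h0.comp (tendsto_add_atTop_nat 1)
    apply h1.congr
    intro M
    exact partial_eq_tsum hq hq1 hw M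
  have hkey : (∏' n : ℕ, (1 + w * q ^ n) * (1 + w⁻¹ * q ^ n))
      = ∑' m : ℤ, (1+w) * w^m * q^(m*(m+1)/2) * φ⁻¹ := tendsto_nhds_unique ht1 ht2
  rw [hkey]
  -- massage the sum
  have hsum1 : Summable (fun m : ℤ => w^m * q^(m*(m+1)/2)) := hplus.of_norm
  have hsum2 : Summable (fun m : ℤ => w^m * q^(m*(m-1)/2)) := hminus.of_norm
  have hsum2' : Summable (fun m : ℤ => w^(m+1) * q^(m*(m+1)/2)) := by
    have h := ((Equiv.addRight (1:ℤ)).summable_iff).2 hsum2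
    apply h.congr
    intro m
    simp only [Function.comp_apply, Equiv.coe_addRight]
    rw [exp_shift]
  have hshift : ∑' m : ℤ, w^(m+1) * q^(m*(m+1)/2) = ∑' n : ℤ, w^n * q^(n*(n-1)/2) := by
    have h := (Equiv.addRight (1:ℤ)).tsum_eq (fun n : ℤ => w^n * q^(n*(n-1)/2))
    rw [← h]
    apply tsum_congr
    intro m
    simp only [Equiv.coe_addRight]
    rw [exp_shift]
  calc ∑' m : ℤ, (1+w) * w^m * q^(m*(m+1)/2) * φ⁻¹
      = (∑' m : ℤ, (1+w) * w^m * q^(m*(m+1)/2)) * φ⁻¹ := tsum_mul_right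
    _ = (∑' m : ℤ, (w^m * q^(m*(m+1)/2) + w^(m+1) * q^(m*(m+1)/2))) * φ⁻¹ := by
        congr 1
        apply tsum_congr
        intro m
        rw [zpow_add_one₀ hw]
        ring
    _ = ((∑' m : ℤ, w^m * q^(m*(m+1)/2)) + ∑' m : ℤ, w^(m+1) * q^(m*(m+1)/2)) * φ⁻¹ := by
        rw [Summable.tsum_add hsum1 hsum2']
    _ = ((∑' m : ℤ, w^m * q^(m*(m+1)/2)) + ∑' n : ℤ, w^n * q^(n*(n-1)/2)) * φ⁻¹ := by
        rw [hshift]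
    _ = φ⁻¹ * ∑' n : ℤ, w ^ n * (q ^ ((n * (n + 1)) / 2) + q ^ ((n * (n - 1)) / 2)) := by
        rw [show ∑' n : ℤ, w ^ n * (q ^ ((n * (n + 1)) / 2) + q ^ ((n * (n - 1)) / 2))
            = (∑' m : ℤ, w^m * q^(m*(m+1)/2)) + ∑' n : ℤ, w^n * q^(n*(n-1)/2) by
          rw [← Summable.tsum_add hsum1 hsum2]
          apply tsum_congr
          intro n
          rw [mul_add]]
        ring

end JTP

/-- The Euler function `φ(q) = ∏_{n=1}^∞ (1 - q^n)`. -/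
noncomputable def eulerPhi (q : ℂ) : ℂ := ∏' n : ℕ, (1 - q ^ (n + 1))

/-- for `0 < |q| < 1` and `w ≠ 0`,
`∏_{n=0}^∞ (1 + w q^n)(1 + w⁻¹ q^n) = φ(q)⁻¹ Σ_{n∈ℤ} w^n (q^{n(n+1)/2} + q^{n(n-1)/2})`,
the infinite product converging and the bilateral series converging absolutely. -/
theorem stmt_5 (q w : ℂ) (hq0 : 0 < ‖q‖) (hq1 : ‖q‖ < 1) (hw : w ≠ 0) :
    Multipliable (fun n : ℕ => (1 + w * q ^ n) * (1 + w⁻¹ * q ^ n)) ∧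
    Summable (fun n : ℤ => ‖w ^ n * (q ^ ((n * (n + 1)) / 2) + q ^ ((n * (n - 1)) / 2))‖) ∧
    (∏' n : ℕ, (1 + w * q ^ n) * (1 + w⁻¹ * q ^ n)) =
      (eulerPhi q)⁻¹ *
        ∑' n : ℤ, w ^ n * (q ^ ((n * (n + 1)) / 2) + q ^ ((n * (n - 1)) / 2)) := by
  have hq : q ≠ 0 := by
    intro h
    rw [h] at hq0
    simp at hq0
  have hq1' : ‖q‖ < 1 := hq1
  exact JTP.main hq hq1' hw
end

section
/- Let a, b, t be complex numbers with a ≠ 0, b ≠ 0, and |t| < |a^ε b^δ|^{−1} for all four sign choices ε, δ ∈ {+1, −1}. Then Σ_{K=0}^∞ c_K(a) c_K(b) t^K = (1 − t^2) / ∏_{ε,δ∈{+1,−1}} (1 − a^ε b^δ t), where the series converges absolutely. -/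
noncomputable def suChar (x : ℂ) (K : ℕ) : ℂ :=
  ∑ j ∈ Finset.range (K + 1), x ^ ((K : ℤ) - 2 * (j : ℤ))

lemma one_sub_ne {x : ℂ} (h : ‖x‖ < 1) : (1 : ℂ) - x ≠ 0 := by
  intro h0
  have : x = 1 := by linear_combination -h0
  rw [this] at h; norm_num at h

lemma suChar_mul {x : ℂ} (hx : x ≠ 0) (K : ℕ) :
    (x - x⁻¹) * suChar x K = x ^ (K + 1) - x⁻¹ ^ (K + 1) := by
  unfold suChar
  rw [Finset.mul_sum]
  have key : ∀ j ∈ Finset.range (K + 1),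
      (x - x⁻¹) * x ^ ((K : ℤ) - 2 * (j : ℤ))
        = (fun j : ℕ => x ^ ((K : ℤ) + 1 - 2 * (j : ℤ))) j
          - (fun j : ℕ => x ^ ((K : ℤ) + 1 - 2 * (j : ℤ))) (j + 1) := by
    intro j _
    simp only []
    have e1 : (K : ℤ) + 1 - 2 * (j : ℤ) = ((K : ℤ) - 2 * (j : ℤ)) + 1 := by ring
    have e2 : (K : ℤ) + 1 - 2 * ((j + 1 : ℕ) : ℤ) = ((K : ℤ) - 2 * (j : ℤ)) - 1 := by
      push_cast; ring
    rw [e1, e2, zpow_add_one₀ hx, zpow_sub_one₀ hx]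
    ring
  rw [Finset.sum_congr rfl key, Finset.sum_range_sub']
  have e3 : (K : ℤ) + 1 - 2 * ((0 : ℕ) : ℤ) = ((K + 1 : ℕ) : ℤ) := by push_cast; ring
  have e4 : (K : ℤ) + 1 - 2 * (((K + 1 : ℕ)) : ℤ) = -((K + 1 : ℕ) : ℤ) := by push_cast; ring
  rw [e3, e4, zpow_natCast, zpow_neg, zpow_natCast, inv_pow]

lemma suChar_of_sq_one {x : ℂ} (hx : x ≠ 0) (h : x ^ 2 = 1) (K : ℕ) :
    suChar x K = ((K : ℂ) + 1) * x ^ K := by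
  unfold suChar
  have key : ∀ j ∈ Finset.range (K + 1), x ^ ((K : ℤ) - 2 * (j : ℤ)) = x ^ K := by
    intro j _
    rw [zpow_sub₀ hx, zpow_natCast, show (2 : ℤ) * (j : ℤ) = ((2 * j : ℕ) : ℤ) by push_cast; ring,
      zpow_natCast, pow_mul, h, one_pow, div_one]
  rw [Finset.sum_congr rfl key, Finset.sum_const, Finset.card_range]
  push_cast
  ring

lemma summable_add_one_mul_geom {x : ℂ} (h : ‖x‖ < 1) :
    Summable (fun n : ℕ => ((n : ℂ) + 1) * x ^ n) := by
  have h1 := summable_pow_mul_geometric_of_norm_lt_one (R := ℂ) 1 h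
  have h2 := summable_geometric_of_norm_lt_one h
  have := h1.add h2
  refine this.congr fun n => ?_
  ring

lemma tsum_add_one_mul_geom {x : ℂ} (h : ‖x‖ < 1) :
    ∑' n : ℕ, ((n : ℂ) + 1) * x ^ n = ((1 - x) ^ 2)⁻¹ := by
  have h1 := summable_pow_mul_geometric_of_norm_lt_one (R := ℂ) 1 h
  have h2 := summable_geometric_of_norm_lt_one h
  have hfun : (fun n : ℕ => ((n : ℂ) + 1) * x ^ n)
      = fun n : ℕ => (n : ℂ) ^ 1 * x ^ n + x ^ n := by funext n; ring
  rw [hfun, Summable.tsum_add h1 h2, tsum_geometric_of_norm_lt_one h]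
  have h3 : ∑' n : ℕ, (n : ℂ) ^ 1 * x ^ n = x / (1 - x) ^ 2 := by
    simpa using tsum_coe_mul_geometric_of_norm_lt_one h
  rw [h3]
  have hx : (1 : ℂ) - x ≠ 0 := one_sub_ne h
  field_simp
  ring

lemma summable_sq_add_one_mul_geom {x : ℂ} (h : ‖x‖ < 1) :
    Summable (fun n : ℕ => ((n : ℂ) + 1) ^ 2 * x ^ n) := by
  have h1 := summable_pow_mul_geometric_of_norm_lt_one (R := ℂ) 2 h
  have h2 := (summable_pow_mul_geometric_of_norm_lt_one (R := ℂ) 1 h).mul_left 2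
  have h3 := summable_geometric_of_norm_lt_one h
  refine ((h1.add h2).add h3).congr fun n => ?_
  ring

lemma tsum_sq_add_one_mul_geom {x : ℂ} (h : ‖x‖ < 1) :
    ∑' n : ℕ, ((n : ℂ) + 1) ^ 2 * x ^ n = (1 + x) / (1 - x) ^ 3 := by
  have hx : (1 : ℂ) - x ≠ 0 := one_sub_ne h
  set S := ∑' n : ℕ, ((n : ℂ) + 1) ^ 2 * x ^ n with hS
  have hsum := summable_sq_add_one_mul_geom h
  have hsum2 := summable_pow_mul_geometric_of_norm_lt_one (R := ℂ) 2 h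
  have hshift : ∑' n : ℕ, (n : ℂ) ^ 2 * x ^ n = x * S := by
    have h0 : ((0 : ℕ) : ℂ) ^ 2 * x ^ 0 = 0 := by norm_num
    rw [Summable.tsum_eq_zero_add hsum2, h0, zero_add, hS, ← tsum_mul_left]
    exact tsum_congr fun n => by push_cast; ring
  have hdiff : S - ∑' n : ℕ, (n : ℂ) ^ 2 * x ^ n
      = 2 * ((1 - x) ^ 2)⁻¹ - (1 - x)⁻¹ := by
    rw [← Summable.tsum_sub hsum hsum2]
    have hfun : (fun n : ℕ => ((n : ℂ) + 1) ^ 2 * x ^ n - (n : ℂ) ^ 2 * x ^ n)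
        = fun n : ℕ => 2 * (((n : ℂ) + 1) * x ^ n) - x ^ n := by funext n; ring
    rw [hfun, Summable.tsum_sub ((summable_add_one_mul_geom h).mul_left 2)
      (summable_geometric_of_norm_lt_one h),
      tsum_mul_left, tsum_add_one_mul_geom h, tsum_geometric_of_norm_lt_one h]
  rw [hshift] at hdiff
  field_simp at hdiff
  rw [eq_div_iff (pow_ne_zero 3 hx)]
  have h4 : (S * (1 - x) ^ 3 - (1 + x)) * (1 - x) = 0 := by linear_combination (1 - x) * hdiff
  rcases mul_eq_zero.mp h4 with h5 | h5
  · linear_combination h5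
  · exact absurd (by linear_combination h5) hx

lemma alg2 (B b c u v t s : ℂ) (hB : B ≠ 0) (hu : u ≠ 0) (hv : v ≠ 0)
    (hbc : b * c = 1) (hs2 : s ^ 2 = 1) (hBdef : B = b - c)
    (hudef : u = 1 - s * b * t) (hvdef : v = 1 - s * c * t) :
    B⁻¹ * (b * ((u ^ 2)⁻¹) - c * ((v ^ 2)⁻¹)) = (1 - t ^ 2) / (u ^ 2 * v ^ 2) := by
  have key : b * v ^ 2 - c * u ^ 2 = B * (1 - t ^ 2) := by
    subst hBdef hudef hvdef
    linear_combination (-(t ^ 2 * (b - c))) * hs2 + (-(t ^ 2 * (b - c)) * s ^ 2) * hbc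
  have expand : B⁻¹ * (b * ((u ^ 2)⁻¹) - c * ((v ^ 2)⁻¹))
      = (b * v ^ 2 - c * u ^ 2) / (B * (u ^ 2 * v ^ 2)) := by
    field_simp
  rw [expand, key, mul_div_mul_left _ _ hB]

lemma tsum_deg {s b t : ℂ} (hs2 : s ^ 2 = 1) (hb : b ≠ 0) (hbb : b - b⁻¹ ≠ 0)
    (h1 : ‖s * b * t‖ < 1) (h2 : ‖s * b⁻¹ * t‖ < 1) :
    ∑' K : ℕ, suChar s K * suChar b K * t ^ K
      = (1 - t ^ 2) / ((1 - s * b * t) ^ 2 * (1 - s * b⁻¹ * t) ^ 2) := by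
  have hs0 : s ≠ 0 := by
    intro h; rw [h] at hs2; norm_num at hs2
  have hx1 := one_sub_ne h1
  have hx2 := one_sub_ne h2
  have hfun : ∀ K : ℕ, suChar s K * suChar b K * t ^ K
      = (b - b⁻¹)⁻¹ * (b * (((K : ℂ) + 1) * (s * b * t) ^ K)
          - b⁻¹ * (((K : ℂ) + 1) * (s * b⁻¹ * t) ^ K)) := by
    intro K
    rw [suChar_of_sq_one hs0 hs2, eq_comm, inv_mul_eq_iff_eq_mul₀ hbb]
    linear_combination (-(((K : ℂ) + 1) * s ^ K * t ^ K)) * suChar_mul hb K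
  rw [tsum_congr hfun, tsum_mul_left,
    Summable.tsum_sub ((summable_add_one_mul_geom h1).mul_left b)
      ((summable_add_one_mul_geom h2).mul_left b⁻¹),
    tsum_mul_left, tsum_mul_left, tsum_add_one_mul_geom h1, tsum_add_one_mul_geom h2]
  exact alg2 _ b b⁻¹ _ _ t s hbb hx1 hx2 (mul_inv_cancel₀ hb) hs2 rfl rfl rfl

lemma expand4 (P w1 w2 w3 w4 u1 u2 u3 u4 : ℂ) (_hP : P ≠ 0) (h1 : u1 ≠ 0)
    (h2 : u2 ≠ 0) (h3 : u3 ≠ 0) (h4 : u4 ≠ 0) :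
    P⁻¹ * (w1 * u1⁻¹ - w2 * u2⁻¹ - w3 * u3⁻¹ + w4 * u4⁻¹)
      = (w1 * (u2 * u3 * u4) - w2 * (u1 * u3 * u4) - w3 * (u1 * u2 * u4) + w4 * (u1 * u2 * u3))
        / (P * (u1 * u2 * u3 * u4)) := by
  field_simp

lemma tsum_gen {a b t : ℂ} (ha : a ≠ 0) (hb : b ≠ 0)
    (haa : a - a⁻¹ ≠ 0) (hbb : b - b⁻¹ ≠ 0)
    (h1 : ‖a * b * t‖ < 1) (h2 : ‖a * b⁻¹ * t‖ < 1)
    (h3 : ‖a⁻¹ * b * t‖ < 1) (h4 : ‖a⁻¹ * b⁻¹ * t‖ < 1) :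
    ∑' K : ℕ, suChar a K * suChar b K * t ^ K
      = (1 - t ^ 2) /
        ((1 - a * b * t) * (1 - a * b⁻¹ * t) * (1 - a⁻¹ * b * t) * (1 - a⁻¹ * b⁻¹ * t)) := by
  have hx1 := one_sub_ne h1
  have hx2 := one_sub_ne h2
  have hx3 := one_sub_ne h3
  have hx4 := one_sub_ne h4
  have hAB : (a - a⁻¹) * (b - b⁻¹) ≠ 0 := mul_ne_zero haa hbb
  have hfun : ∀ K : ℕ, suChar a K * suChar b K * t ^ K
      = ((a - a⁻¹) * (b - b⁻¹))⁻¹ *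
        ((a * b) * (a * b * t) ^ K - (a * b⁻¹) * (a * b⁻¹ * t) ^ K
          - (a⁻¹ * b) * (a⁻¹ * b * t) ^ K + (a⁻¹ * b⁻¹) * (a⁻¹ * b⁻¹ * t) ^ K) := by
    intro K
    rw [eq_comm, inv_mul_eq_iff_eq_mul₀ hAB]
    linear_combination (-(((b - b⁻¹) * suChar b K) * t ^ K)) * suChar_mul ha K
      + (-((a ^ (K + 1) - a⁻¹ ^ (K + 1)) * t ^ K)) * suChar_mul hb K
  have S1 := (summable_geometric_of_norm_lt_one h1).mul_left (a * b)
  have S2 := (summable_geometric_of_norm_lt_one h2).mul_left (a * b⁻¹)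
  have S3 := (summable_geometric_of_norm_lt_one h3).mul_left (a⁻¹ * b)
  have S4 := (summable_geometric_of_norm_lt_one h4).mul_left (a⁻¹ * b⁻¹)
  rw [tsum_congr hfun, tsum_mul_left, Summable.tsum_add ((S1.sub S2).sub S3) S4,
    Summable.tsum_sub (S1.sub S2) S3, Summable.tsum_sub S1 S2, tsum_mul_left, tsum_mul_left,
    tsum_mul_left, tsum_mul_left, tsum_geometric_of_norm_lt_one h1,
    tsum_geometric_of_norm_lt_one h2, tsum_geometric_of_norm_lt_one h3,
    tsum_geometric_of_norm_lt_one h4]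
  -- now a purely algebraic identity
  have key : a * b * ((1 - a * b⁻¹ * t) * (1 - a⁻¹ * b * t) * (1 - a⁻¹ * b⁻¹ * t))
      - a * b⁻¹ * ((1 - a * b * t) * (1 - a⁻¹ * b * t) * (1 - a⁻¹ * b⁻¹ * t))
      - a⁻¹ * b * ((1 - a * b * t) * (1 - a * b⁻¹ * t) * (1 - a⁻¹ * b⁻¹ * t))
      + a⁻¹ * b⁻¹ * ((1 - a * b * t) * (1 - a * b⁻¹ * t) * (1 - a⁻¹ * b * t))
      = (a - a⁻¹) * (b - b⁻¹) * (1 - t ^ 2) := by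
    linear_combination
      (-(a⁻¹ * b * b⁻¹ ^ 2 * t ^ 2) + a⁻¹ * b ^ 2 * b⁻¹ * t ^ 2 + a * b * b⁻¹ ^ 2 * t ^ 2
        - a * b ^ 2 * b⁻¹ * t ^ 2) * mul_inv_cancel₀ ha
      + (-(a⁻¹ * b⁻¹ * t ^ 2) + a⁻¹ * b * t ^ 2 + a * b⁻¹ * t ^ 2 - a * b * t ^ 2)
        * mul_inv_cancel₀ hb
  have expand := expand4 ((a - a⁻¹) * (b - b⁻¹)) (a * b) (a * b⁻¹) (a⁻¹ * b) (a⁻¹ * b⁻¹)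
    (1 - a * b * t) (1 - a * b⁻¹ * t) (1 - a⁻¹ * b * t) (1 - a⁻¹ * b⁻¹ * t)
    hAB hx1 hx2 hx3 hx4
  rw [expand, key, mul_div_mul_left _ _ hAB]

lemma main_tsum {a b t : ℂ} (ha : a ≠ 0) (hb : b ≠ 0)
    (h1 : ‖a * b * t‖ < 1) (h2 : ‖a * b⁻¹ * t‖ < 1)
    (h3 : ‖a⁻¹ * b * t‖ < 1) (h4 : ‖a⁻¹ * b⁻¹ * t‖ < 1) :
    ∑' K : ℕ, suChar a K * suChar b K * t ^ K
      = (1 - t ^ 2) /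
        ((1 - a * b * t) * (1 - a * b⁻¹ * t) * (1 - a⁻¹ * b * t) * (1 - a⁻¹ * b⁻¹ * t)) := by
  by_cases hA : a - a⁻¹ = 0
  · have haq : a ^ 2 = 1 := by
      have h := sub_eq_zero.mp hA
      rw [sq]; nth_rewrite 2 [h]; exact mul_inv_cancel₀ ha
    have hainv : a⁻¹ = a := by
      exact inv_eq_of_mul_eq_one_right (by rw [← sq]; exact haq)
    by_cases hB : b - b⁻¹ = 0
    · -- both degenerate
      have hbq : b ^ 2 = 1 := by
        have h := sub_eq_zero.mp hB
        rw [sq]; nth_rewrite 2 [h]; exact mul_inv_cancel₀ hb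
      have hbinv : b⁻¹ = b := by
        exact inv_eq_of_mul_eq_one_right (by rw [← sq]; exact hbq)
      have hfun : ∀ K : ℕ, suChar a K * suChar b K * t ^ K
          = ((K : ℂ) + 1) ^ 2 * (a * b * t) ^ K := by
        intro K
        rw [suChar_of_sq_one ha haq, suChar_of_sq_one hb hbq]
        ring
      rw [tsum_congr hfun, tsum_sq_add_one_mul_geom h1, hainv, hbinv]
      have hx2 : (a * b * t) ^ 2 = t ^ 2 := by
        rw [show (a * b * t) ^ 2 = a ^ 2 * b ^ 2 * t ^ 2 from by ring, haq, hbq]; ring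
      have hne := one_sub_ne h1
      rw [div_eq_div_iff (pow_ne_zero 3 hne)
        (by exact mul_ne_zero (mul_ne_zero (mul_ne_zero hne hne) hne) hne)]
      rw [← hx2]
      ring
    · -- a degenerate only
      rw [hainv, show (1 - a * b * t) * (1 - a * b⁻¹ * t) * (1 - a * b * t) * (1 - a * b⁻¹ * t)
          = (1 - a * b * t) ^ 2 * (1 - a * b⁻¹ * t) ^ 2 from by ring]
      exact tsum_deg haq hb hB h1 h2
  · by_cases hB : b - b⁻¹ = 0
    · -- b degenerate only
      have hbq : b ^ 2 = 1 := by
        have h := sub_eq_zero.mp hB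
        rw [sq]; nth_rewrite 2 [h]; exact mul_inv_cancel₀ hb
      have hbinv : b⁻¹ = b := by
        exact inv_eq_of_mul_eq_one_right (by rw [← sq]; exact hbq)
      have h1' : ‖b * a * t‖ < 1 := by rw [show b * a * t = a * b * t from by ring]; exact h1
      have h2' : ‖b * a⁻¹ * t‖ < 1 := by rw [show b * a⁻¹ * t = a⁻¹ * b * t from by ring]; exact h3
      have hfun : ∀ K : ℕ, suChar a K * suChar b K * t ^ K
          = suChar b K * suChar a K * t ^ K := fun K => by ring
      rw [tsum_congr hfun, tsum_deg hbq ha hA h1' h2', hbinv,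
        show (1 - a * b * t) * (1 - a * b * t) * (1 - a⁻¹ * b * t) * (1 - a⁻¹ * b * t)
          = (1 - b * a * t) ^ 2 * (1 - b * a⁻¹ * t) ^ 2 from by ring]
    · exact tsum_gen ha hb hA hB h1 h2 h3 h4

lemma zpow_le_max {c : ℝ} (hc : 0 < c) {K : ℕ} {e : ℤ} (h1 : -(K : ℤ) ≤ e) (h2 : e ≤ (K : ℤ)) :
    c ^ e ≤ (max c c⁻¹) ^ K := by
  set M := max c c⁻¹ with hM
  have hM1 : 1 ≤ M := by
    rcases le_total 1 c with h | h
    · exact h.trans (le_max_left _ _)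
    · exact (one_le_inv_iff₀.mpr ⟨hc, h⟩).trans (le_max_right _ _)
  rcases le_or_gt 0 e with he | he
  · obtain ⟨n, rfl⟩ := Int.eq_ofNat_of_zero_le he
    rw [zpow_natCast]
    calc c ^ n ≤ M ^ n := pow_le_pow_left₀ hc.le (le_max_left _ _) n
    _ ≤ M ^ K := pow_le_pow_right₀ hM1 (by exact_mod_cast h2)
  · obtain ⟨n, hn⟩ := Int.eq_ofNat_of_zero_le (neg_nonneg.mpr he.le)
    have : c ^ e = (c⁻¹) ^ n := by
      rw [← zpow_natCast, ← hn, zpow_neg, inv_zpow, inv_inv]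
    rw [this]
    calc c⁻¹ ^ n ≤ M ^ n := pow_le_pow_left₀ (by positivity) (le_max_right _ _) n
    _ ≤ M ^ K := pow_le_pow_right₀ hM1 (by omega)

lemma suChar_norm_le {x : ℂ} (hx : x ≠ 0) (K : ℕ) :
    ‖suChar x K‖ ≤ ((K : ℝ) + 1) * (max ‖x‖ ‖x‖⁻¹) ^ K := by
  unfold suChar
  calc ‖∑ j ∈ Finset.range (K + 1), x ^ ((K : ℤ) - 2 * (j : ℤ))‖
      ≤ ∑ j ∈ Finset.range (K + 1), ‖x ^ ((K : ℤ) - 2 * (j : ℤ))‖ := norm_sum_le _ _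
    _ ≤ ∑ j ∈ Finset.range (K + 1), (max ‖x‖ ‖x‖⁻¹) ^ K := by
        refine Finset.sum_le_sum fun j hj => ?_
        rw [norm_zpow]
        have hj' : j ≤ K := by
          have := Finset.mem_range.mp hj; omega
        exact zpow_le_max (norm_pos_iff.mpr hx) (by push_cast; omega)
          (by push_cast; omega)
    _ = ((K : ℝ) + 1) * (max ‖x‖ ‖x‖⁻¹) ^ K := by
        rw [Finset.sum_const, Finset.card_range, nsmul_eq_mul]; push_cast; ring

lemma summable_norm_suChar {a b t : ℂ} (ha : a ≠ 0) (hb : b ≠ 0)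
    (hr : max ‖a‖ ‖a‖⁻¹ * max ‖b‖ ‖b‖⁻¹ * ‖t‖ < 1) :
    Summable (fun K : ℕ => ‖suChar a K * suChar b K * t ^ K‖) := by
  set Ma := max ‖a‖ ‖a‖⁻¹ with hMa
  set Mb := max ‖b‖ ‖b‖⁻¹ with hMb
  have hMa0 : 0 ≤ Ma := le_trans (norm_nonneg a) (le_max_left _ _)
  have hMb0 : 0 ≤ Mb := le_trans (norm_nonneg b) (le_max_left _ _)
  set r : ℝ := Ma * Mb * ‖t‖ with hrdef
  have hr0 : 0 ≤ r := by positivity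
  have hrlt : ‖r‖ < 1 := by rwa [Real.norm_of_nonneg hr0]
  -- the comparison series
  have hcomp : Summable (fun K : ℕ => ((K : ℝ) + 1) ^ 2 * r ^ K) := by
    have h1 := summable_pow_mul_geometric_of_norm_lt_one (R := ℝ) 2 hrlt
    have h2 := (summable_pow_mul_geometric_of_norm_lt_one (R := ℝ) 1 hrlt).mul_left 2
    have h3 := summable_geometric_of_norm_lt_one hrlt
    refine ((h1.add h2).add h3).congr fun n => ?_
    push_cast; ring
  refine Summable.of_nonneg_of_le (fun K => norm_nonneg _) (fun K => ?_) hcomp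
  have h1 := suChar_norm_le ha K
  have h2 := suChar_norm_le hb K
  calc ‖suChar a K * suChar b K * t ^ K‖
      = ‖suChar a K‖ * ‖suChar b K‖ * ‖t‖ ^ K := by
        rw [norm_mul, norm_mul, norm_pow]
    _ ≤ (((K : ℝ) + 1) * Ma ^ K) * (((K : ℝ) + 1) * Mb ^ K) * ‖t‖ ^ K := by
        refine mul_le_mul (mul_le_mul h1 h2 (norm_nonneg _) (by positivity)) le_rfl
          (by positivity) (by positivity)
    _ = ((K : ℝ) + 1) ^ 2 * r ^ K := by
        rw [hrdef, mul_pow, mul_pow]; ring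

lemma abs_mul_lt_one {c t : ℂ} (hc : c ≠ 0) (h : ‖t‖ < (‖c‖)⁻¹) :
    ‖c * t‖ < 1 := by
  have hc' : 0 < ‖c‖ := norm_pos_iff.mpr hc
  rw [norm_mul]
  calc ‖c‖ * ‖t‖ < ‖c‖ * (‖c‖)⁻¹ :=
        mul_lt_mul_of_pos_left h hc'
    _ = 1 := mul_inv_cancel₀ (ne_of_gt hc')

/-- for nonzero `a, b` and `|t| < |a^ε b^δ|⁻¹` for all sign choices,
`Σ_{K=0}^∞ c_K(a) c_K(b) t^K = (1 - t²) / ∏_{ε,δ} (1 - a^ε b^δ t)`,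
the series converging absolutely. -/
theorem stmt_6 (a b t : ℂ) (ha : a ≠ 0) (hb : b ≠ 0)
    (ht : ∀ ε δ : ℤ, (ε = 1 ∨ ε = -1) → (δ = 1 ∨ δ = -1) →
      ‖t‖ < (‖a ^ ε * b ^ δ‖)⁻¹) :
    Summable (fun K : ℕ => ‖suChar a K * suChar b K * t ^ K‖) ∧
    (∑' K : ℕ, suChar a K * suChar b K * t ^ K) =
      (1 - t ^ 2) /
        ((1 - a * b * t) * (1 - a * b⁻¹ * t) * (1 - a⁻¹ * b * t) * (1 - a⁻¹ * b⁻¹ * t)) := by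
  have ha' : a⁻¹ ≠ 0 := inv_ne_zero ha
  have hb' : b⁻¹ ≠ 0 := inv_ne_zero hb
  have h1 : ‖a * b * t‖ < 1 := abs_mul_lt_one (mul_ne_zero ha hb)
    (by simpa using ht 1 1 (Or.inl rfl) (Or.inl rfl))
  have h2 : ‖a * b⁻¹ * t‖ < 1 := abs_mul_lt_one (mul_ne_zero ha hb')
    (by simpa using ht 1 (-1) (Or.inl rfl) (Or.inr rfl))
  have h3 : ‖a⁻¹ * b * t‖ < 1 := abs_mul_lt_one (mul_ne_zero ha' hb)
    (by simpa using ht (-1) 1 (Or.inr rfl) (Or.inl rfl))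
  have h4 : ‖a⁻¹ * b⁻¹ * t‖ < 1 := abs_mul_lt_one (mul_ne_zero ha' hb')
    (by simpa using ht (-1) (-1) (Or.inr rfl) (Or.inr rfl))
  have hMa : ∃ e : ℤ, (e = 1 ∨ e = -1) ∧ max ‖a‖ ‖a‖⁻¹ = ‖a ^ e‖ := by
    rcases le_total ‖a‖ ‖a‖⁻¹ with h | h
    · exact ⟨-1, Or.inr rfl, by
        rw [max_eq_right h, zpow_neg_one, norm_inv]⟩
    · exact ⟨1, Or.inl rfl, by rw [max_eq_left h, zpow_one]⟩
  have hMb : ∃ e : ℤ, (e = 1 ∨ e = -1) ∧ max ‖b‖ ‖b‖⁻¹ = ‖b ^ e‖ := by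
    rcases le_total ‖b‖ ‖b‖⁻¹ with h | h
    · exact ⟨-1, Or.inr rfl, by
        rw [max_eq_right h, zpow_neg_one, norm_inv]⟩
    · exact ⟨1, Or.inl rfl, by rw [max_eq_left h, zpow_one]⟩
  obtain ⟨ea, hea, hMaeq⟩ := hMa
  obtain ⟨eb, heb, hMbeq⟩ := hMb
  have hr : max ‖a‖ ‖a‖⁻¹ * max ‖b‖ ‖b‖⁻¹ * ‖t‖ < 1 := by
    have hc : a ^ ea * b ^ eb ≠ 0 :=
      mul_ne_zero (zpow_ne_zero _ ha) (zpow_ne_zero _ hb)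
    have := abs_mul_lt_one hc (ht ea eb hea heb)
    rw [norm_mul, norm_mul] at this
    rw [hMaeq, hMbeq]
    exact this
  exact ⟨summable_norm_suChar ha hb hr, main_tsum ha hb h1 h2 h3 h4⟩
end

section
/- Work in the ring R[[t]] of formal power series over the Laurent polynomial ring R = ℤ[u, u^{−1}, a, a^{−1}, b, b^{−1}], and set F(t) = (1 − t^2)(1 + u t)(1 + u^{−1} t) · ∏_{ε,δ∈{+1,−1}} (1 − a^ε b^δ t)^{−1} (each factor 1 − a^ε b^δ t has constant term 1, hence is invertible in R[[t]]). Then the coefficient of t^0 in F equals 1, and for every integer m ≥ 0 the coefficient of t^{m+1} in F equals (u + u^{−1}) c_m(a) c_m(b) + c_{m+1}(a) c_{m+1}(b) + c_{m−1}(a) c_{m−1}(b). -/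
/-- `suCharU x K = Σ_{j=0}^{K} x^{K-2j}` is the SU(2) character of the spin-`K/2`
representation evaluated at a unit `x` of a commutative ring, with the convention
that it vanishes for negative `K` (so `suCharU x (-1) = 0`). -/
def suCharU {R : Type*} [CommRing R] (x : Rˣ) (K : ℤ) : R :=
  if K < 0 then 0 else ∑ j ∈ Finset.range (K.toNat + 1), ((x ^ (K - 2 * (j : ℤ)) : Rˣ) : R)

section aux
variable {R : Type*} [CommRing R]

lemma suCharU_neg (x : Rˣ) {K : ℤ} (h : K < 0) : suCharU (R := R) x K = 0 := if_pos h

lemma suCharU_zero (x : Rˣ) : suCharU (R := R) x 0 = 1 := by simp [suCharU]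

lemma suCharU_natCast (x : Rˣ) (n : ℕ) :
    suCharU (R := R) x (n : ℤ) =
      ∑ j ∈ Finset.range (n + 1), ((x ^ ((n : ℤ) - 2 * (j : ℤ)) : Rˣ) : R) := by
  rw [suCharU, if_neg (by omega)]
  simp

lemma suCharU_one (x : Rˣ) : suCharU (R := R) x 1 = (x : R) + ((x⁻¹ : Rˣ) : R) := by
  have h := suCharU_natCast (R := R) x 1
  norm_num [Finset.sum_range_succ] at h
  convert h using 2

lemma suCharU_rec (x : Rˣ) (k : ℤ) (hk : 1 ≤ k) :
    suCharU (R := R) x k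
      = ((x : R) + ((x⁻¹ : Rˣ) : R)) * suCharU x (k - 1) - suCharU x (k - 2) := by
  obtain ⟨n, rfl⟩ : ∃ n : ℕ, k = (n : ℤ) + 1 := ⟨(k - 1).toNat, by omega⟩
  cases n with
  | zero =>
    norm_num [suCharU_one, suCharU_zero, suCharU_neg (R := R) x (show (-1 : ℤ) < 0 by norm_num)]
  | succ m =>
    have e0 : ((m : ℤ) + 1 + 1) = ((m + 2 : ℕ) : ℤ) := by push_cast; ring
    have e1 : (((m + 2 : ℕ) : ℤ) - 1) = ((m + 1 : ℕ) : ℤ) := by push_cast; ring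
    have e2 : (((m + 2 : ℕ) : ℤ) - 2) = ((m : ℕ) : ℤ) := by push_cast; ring
    push_cast
    rw [e0, e1, e2, suCharU_natCast, suCharU_natCast, suCharU_natCast]
    have key : ∀ j ∈ Finset.range (m + 1 + 1),
        ((x : R) + ((x⁻¹ : Rˣ) : R)) * ((x ^ (((m+1 : ℕ) : ℤ) - 2 * (j : ℤ)) : Rˣ) : R)
          = ((x ^ (((m+2 : ℕ) : ℤ) - 2 * (j : ℤ)) : Rˣ) : R)
            + ((x ^ (((m : ℕ) : ℤ) - 2 * (j : ℤ)) : Rˣ) : R) := by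
      intro j _
      have f1 : ((m+2 : ℕ) : ℤ) - 2 * (j : ℤ) = 1 + (((m+1 : ℕ) : ℤ) - 2 * (j : ℤ)) := by
        push_cast; ring
      have f2 : ((m : ℕ) : ℤ) - 2 * (j : ℤ) = (-1) + (((m+1 : ℕ) : ℤ) - 2 * (j : ℤ)) := by
        push_cast; ring
      rw [f1, f2, zpow_add, zpow_add, zpow_one, zpow_neg_one]
      push_cast [Units.val_mul]
      ring
    rw [Finset.mul_sum, Finset.sum_congr rfl key, Finset.sum_add_distrib]
    rw [Finset.sum_range_succ
      (f := fun j => ((x ^ (((m : ℕ) : ℤ) - 2 * (j : ℤ)) : Rˣ) : R)) (n := m + 1)]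
    rw [Finset.sum_range_succ
      (f := fun j => ((x ^ (((m+2 : ℕ) : ℤ) - 2 * (j : ℤ)) : Rˣ) : R)) (n := m + 2)]
    have f3 : ((m+2 : ℕ) : ℤ) - 2 * ((m+2 : ℕ) : ℤ) = ((m : ℕ) : ℤ) - 2 * ((m+1 : ℕ) : ℤ) := by
      push_cast; ring
    rw [f3]
    ring
end aux

section aux2
variable {R : Type*} [CommRing R]

/-- product of the two characters, indexed by `ℤ`. -/
def gpAB (a b : Rˣ) (z : ℤ) : R := suCharU a z * suCharU b z

lemma gpAB_neg (a b : Rˣ) {z : ℤ} (h : z < 0) : gpAB (R := R) a b z = 0 := by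
  rw [gpAB, suCharU_neg a h, zero_mul]

lemma core (a b : Rˣ) (z : ℤ) :
    gpAB (R := R) a b z
      - (((a : R) + ((a⁻¹ : Rˣ) : R)) * ((b : R) + ((b⁻¹ : Rˣ) : R))) * gpAB a b (z - 1)
      + (((a : R) + ((a⁻¹ : Rˣ) : R)) ^ 2 + ((b : R) + ((b⁻¹ : Rˣ) : R)) ^ 2 - 2)
          * gpAB a b (z - 2)
      - (((a : R) + ((a⁻¹ : Rˣ) : R)) * ((b : R) + ((b⁻¹ : Rˣ) : R))) * gpAB a b (z - 3)
      + gpAB a b (z - 4)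
      = if z = 0 then 1 else if z = 2 then -1 else 0 := by
  rcases lt_or_ge z 0 with hz | hz
  · rw [gpAB_neg a b hz, gpAB_neg a b (by omega : z - 1 < 0),
      gpAB_neg a b (by omega : z - 2 < 0), gpAB_neg a b (by omega : z - 3 < 0),
      gpAB_neg a b (by omega : z - 4 < 0), if_neg (by omega), if_neg (by omega)]
    ring
  · rcases lt_or_ge z 3 with hz3 | hz3
    · interval_cases z
      · rw [if_pos rfl]
        simp only [gpAB, suCharU_zero]
        rw [suCharU_neg a (by norm_num : (0:ℤ) - 1 < 0),
          suCharU_neg a (by norm_num : (0:ℤ) - 2 < 0),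
          suCharU_neg a (by norm_num : (0:ℤ) - 3 < 0),
          suCharU_neg a (by norm_num : (0:ℤ) - 4 < 0)]
        ring
      · rw [if_neg (by norm_num), if_neg (by norm_num)]
        simp only [gpAB]
        norm_num [suCharU_one, suCharU_zero,
          suCharU_neg a (by norm_num : (-1:ℤ) < 0), suCharU_neg b (by norm_num : (-1:ℤ) < 0),
          suCharU_neg a (by norm_num : (-2:ℤ) < 0), suCharU_neg b (by norm_num : (-2:ℤ) < 0),
          suCharU_neg a (by norm_num : (-3:ℤ) < 0), suCharU_neg b (by norm_num : (-3:ℤ) < 0)]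
      · rw [if_neg (by norm_num), if_pos rfl]
        simp only [gpAB]
        have h2a := suCharU_rec (R := R) a 2 (by norm_num)
        have h2b := suCharU_rec (R := R) b 2 (by norm_num)
        norm_num [suCharU_one, suCharU_zero,
          suCharU_neg a (by norm_num : (-1:ℤ) < 0), suCharU_neg b (by norm_num : (-1:ℤ) < 0),
          suCharU_neg a (by norm_num : (-2:ℤ) < 0), suCharU_neg b (by norm_num : (-2:ℤ) < 0)]
          at h2a h2b ⊢
        rw [h2a, h2b]
        ring
    · rw [if_neg (by omega), if_neg (by omega)]
      have hA1 := suCharU_rec (R := R) a z (by omega)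
      have hA2 := suCharU_rec (R := R) a (z - 1) (by omega)
      have hA3 := suCharU_rec (R := R) a (z - 2) (by omega)
      have hB1 := suCharU_rec (R := R) b z (by omega)
      have hB2 := suCharU_rec (R := R) b (z - 1) (by omega)
      have hB3 := suCharU_rec (R := R) b (z - 2) (by omega)
      rw [show z - 1 - 1 = z - 2 from by ring, show z - 1 - 2 = z - 3 from by ring] at hA2 hB2
      rw [show z - 2 - 1 = z - 3 from by ring, show z - 2 - 2 = z - 4 from by ring] at hA3 hB3
      have hA3' : suCharU (R := R) a (z - 4)
          = ((a : R) + ((a⁻¹ : Rˣ) : R)) * suCharU a (z - 3) - suCharU a (z - 2) := by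
        linear_combination hA3
      have hB3' : suCharU (R := R) b (z - 4)
          = ((b : R) + ((b⁻¹ : Rˣ) : R)) * suCharU b (z - 3) - suCharU b (z - 2) := by
        linear_combination hB3
      simp only [gpAB]
      rw [hA1, hB1, hA2, hB2, hA3', hB3']
      ring

end aux2

section aux3
variable {R : Type*} [CommRing R]

/-- coefficient sequence of `F`, indexed by `ℤ`. -/
def fF (u a b : Rˣ) (z : ℤ) : R :=
  ((u : R) + ((u⁻¹ : Rˣ) : R)) * gpAB a b (z - 1) + gpAB a b z + gpAB a b (z - 2)

lemma fF_neg (u a b : Rˣ) {z : ℤ} (h : z < 0) : fF (R := R) u a b z = 0 := by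
  rw [fF, gpAB_neg a b h, gpAB_neg a b (by omega : z - 1 < 0),
    gpAB_neg a b (by omega : z - 2 < 0)]
  ring

lemma keyZ (u a b : Rˣ) (z : ℤ) :
    fF (R := R) u a b z
      - (((a : R) + ((a⁻¹ : Rˣ) : R)) * ((b : R) + ((b⁻¹ : Rˣ) : R))) * fF u a b (z - 1)
      + (((a : R) + ((a⁻¹ : Rˣ) : R)) ^ 2 + ((b : R) + ((b⁻¹ : Rˣ) : R)) ^ 2 - 2)
          * fF u a b (z - 2)
      - (((a : R) + ((a⁻¹ : Rˣ) : R)) * ((b : R) + ((b⁻¹ : Rˣ) : R))) * fF u a b (z - 3)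
      + fF u a b (z - 4)
      = (if z = 0 then 1 else 0) + ((u : R) + ((u⁻¹ : Rˣ) : R)) * (if z = 1 then 1 else 0)
        - ((u : R) + ((u⁻¹ : Rˣ) : R)) * (if z = 3 then 1 else 0) - (if z = 4 then 1 else 0) := by
  have C0 := core (R := R) a b z
  have C1 := core (R := R) a b (z - 1)
  have C2 := core (R := R) a b (z - 2)
  rw [show z - 1 - 1 = z - 2 from by ring, show z - 1 - 2 = z - 3 from by ring,
    show z - 1 - 3 = z - 4 from by ring, show z - 1 - 4 = z - 5 from by ring] at C1
  rw [show z - 2 - 1 = z - 3 from by ring, show z - 2 - 2 = z - 4 from by ring,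
    show z - 2 - 3 = z - 5 from by ring, show z - 2 - 4 = z - 6 from by ring] at C2
  simp only [show ((z - 1 = 0) ↔ (z = 1)) from by omega,
    show ((z - 1 = 2) ↔ (z = 3)) from by omega] at C1
  simp only [show ((z - 2 = 0) ↔ (z = 2)) from by omega,
    show ((z - 2 = 2) ↔ (z = 4)) from by omega] at C2
  have split : ∀ c1 c2 : ℤ, c1 ≠ c2 →
      (if z = c1 then (1:R) else if z = c2 then -1 else 0)
        = (if z = c1 then 1 else 0) - (if z = c2 then 1 else 0) := by
    intro c1 c2 h
    split_ifs with h1 h2 <;> simp_all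
  rw [split 0 2 (by norm_num)] at C0
  rw [split 1 3 (by norm_num)] at C1
  rw [split 2 4 (by norm_num)] at C2
  simp only [fF]
  rw [show z - 1 - 1 = z - 2 from by ring, show z - 1 - 2 = z - 3 from by ring,
    show z - 2 - 1 = z - 3 from by ring, show z - 2 - 2 = z - 4 from by ring,
    show z - 3 - 1 = z - 4 from by ring, show z - 3 - 2 = z - 5 from by ring,
    show z - 4 - 1 = z - 5 from by ring, show z - 4 - 2 = z - 6 from by ring]
  linear_combination C0 + ((u : R) + ((u⁻¹ : Rˣ) : R)) * C1 + C2

end aux3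

section ps
open PowerSeries
variable {R : Type*} [CommRing R]

lemma geom_mul (c : R) : (1 - C c * X) * mk (fun n => c ^ n) = 1 := by
  ext n
  rw [sub_mul, one_mul, map_sub]
  cases n with
  | zero => simp
  | succ n =>
    rw [mul_assoc, coeff_C_mul, coeff_succ_X_mul, coeff_mk, coeff_mk, coeff_one,
      if_neg (Nat.succ_ne_zero n), pow_succ]
    ring

lemma invOfUnit_geom (c : R) :
    invOfUnit (1 - C c * X) 1 = mk fun n => c ^ n := by
  have h1 : (1 - C c * X) * invOfUnit (1 - C c * X) 1 = 1 :=
    mul_invOfUnit _ 1 (by simp)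
  calc invOfUnit (1 - C c * X) 1
      = invOfUnit (1 - C c * X) 1 * ((1 - C c * X) * mk fun n => c ^ n) := by
        rw [geom_mul, mul_one]
    _ = ((1 - C c * X) * invOfUnit (1 - C c * X) 1) * mk (fun n => c ^ n) := by ring
    _ = mk fun n => c ^ n := by rw [h1, one_mul]

end ps

section ps2
open PowerSeries
variable {R : Type*} [CommRing R]

lemma coeff_shift (u a b : Rˣ) (k n : ℕ) :
    (coeff n) (X ^ k * mk (fun j => fF (R := R) u a b (j : ℤ)))
      = fF u a b ((n : ℤ) - k) := by
  rw [coeff_X_pow_mul']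
  split_ifs with h
  · rw [coeff_mk]; congr 1; omega
  · exact (fF_neg u a b (by omega)).symm

lemma DG (u a b : Rˣ) :
    (1 - C ((↑(a * b) : R)) * X) * (1 - C ((↑(a * b⁻¹) : R)) * X) *
        (1 - C ((↑(a⁻¹ * b) : R)) * X) * (1 - C ((↑(a⁻¹ * b⁻¹) : R)) * X) *
        mk (fun j => fF (R := R) u a b (j : ℤ))
      = 1 + C ((u : R) + ((u⁻¹ : Rˣ) : R)) * X
          - C ((u : R) + ((u⁻¹ : Rˣ) : R)) * X ^ 3 - X ^ 4 := by
  have ha : C ((a : R)) * C (((a⁻¹ : Rˣ) : R)) = 1 := by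
    rw [← map_mul]; norm_num
  have hb : C ((b : R)) * C (((b⁻¹ : Rˣ) : R)) = 1 := by
    rw [← map_mul]; norm_num
  set G := mk (fun j => fF (R := R) u a b (j : ℤ)) with hG
  have hexp : (1 - C ((↑(a * b) : R)) * X) * (1 - C ((↑(a * b⁻¹) : R)) * X) *
        (1 - C ((↑(a⁻¹ * b) : R)) * X) * (1 - C ((↑(a⁻¹ * b⁻¹) : R)) * X) * G
      = G - C (((a : R) + ((a⁻¹ : Rˣ) : R)) * ((b : R) + ((b⁻¹ : Rˣ) : R))) * (X ^ 1 * G)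
          + C (((a : R) + ((a⁻¹ : Rˣ) : R)) ^ 2 + ((b : R) + ((b⁻¹ : Rˣ) : R)) ^ 2 - 2)
              * (X ^ 2 * G)
          - C (((a : R) + ((a⁻¹ : Rˣ) : R)) * ((b : R) + ((b⁻¹ : Rˣ) : R))) * (X ^ 3 * G)
          + X ^ 4 * G := by
    simp only [Units.val_mul, map_mul, map_add, map_sub, map_pow, map_one, map_ofNat]
    linear_combination
      ((-2) * X ^ 2 + (C (((b⁻¹ : Rˣ) : R))) ^ 2 * X ^ 2
        + 2 * C ((b : R)) * C (((b⁻¹ : Rˣ) : R)) * X ^ 2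
        + (C ((b : R))) ^ 2 * X ^ 2
        + (C ((b : R))) ^ 2 * (C (((b⁻¹ : Rˣ) : R))) ^ 2 * X ^ 4
        - C (((a⁻¹ : Rˣ) : R)) * C ((b : R)) * (C (((b⁻¹ : Rˣ) : R))) ^ 2 * X ^ 3
        - C (((a⁻¹ : Rˣ) : R)) * (C ((b : R))) ^ 2 * C (((b⁻¹ : Rˣ) : R)) * X ^ 3
        - C ((a : R)) * C ((b : R)) * (C (((b⁻¹ : Rˣ) : R))) ^ 2 * X ^ 3
        - C ((a : R)) * (C ((b : R))) ^ 2 * C (((b⁻¹ : Rˣ) : R)) * X ^ 3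
        + C ((a : R)) * C (((a⁻¹ : Rˣ) : R)) * (C ((b : R))) ^ 2
            * (C (((b⁻¹ : Rˣ) : R))) ^ 2 * X ^ 4) * G * ha
      + (X ^ 4 + C ((b : R)) * C (((b⁻¹ : Rˣ) : R)) * X ^ 4
        - C (((a⁻¹ : Rˣ) : R)) * C (((b⁻¹ : Rˣ) : R)) * X ^ 3
        - C (((a⁻¹ : Rˣ) : R)) * C ((b : R)) * X ^ 3
        + (C (((a⁻¹ : Rˣ) : R))) ^ 2 * X ^ 2
        - C ((a : R)) * C (((b⁻¹ : Rˣ) : R)) * X ^ 3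
        - C ((a : R)) * C ((b : R)) * X ^ 3
        + (C ((a : R))) ^ 2 * X ^ 2) * G * hb
  rw [hexp]
  ext n
  rw [map_add, map_sub, map_add, map_sub, coeff_C_mul, coeff_C_mul, coeff_C_mul,
    coeff_shift, coeff_shift, coeff_shift, coeff_shift, coeff_mk]
  rw [map_sub, map_sub, map_add, coeff_one, coeff_C_mul, coeff_C_mul, coeff_X,
    coeff_X_pow, coeff_X_pow]
  have hk := keyZ (R := R) u a b (n : ℤ)
  simp only [show (((n : ℤ) = 0) ↔ (n = 0)) from by omega,
    show (((n : ℤ) = 1) ↔ (n = 1)) from by omega,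
    show (((n : ℤ) = 3) ↔ (n = 3)) from by omega,
    show (((n : ℤ) = 4) ↔ (n = 4)) from by omega] at hk
  have e0 : fF (R := R) u a b ((n : ℤ)) = fF u a b ((n : ℤ) - 0) := by norm_num
  linear_combination hk

end ps2

/-- in `R[[t]]` over a (Laurent-polynomial-like) commutative ring with
invertible elements `u, a, b`, the series
`F = (1-t²)(1+ut)(1+u⁻¹t) ∏_{ε,δ} (1 - a^ε b^δ t)⁻¹` (each factor `1 - a^ε b^δ t`
has constant term `1`, its inverse being `PowerSeries.invOfUnit _ 1`) has
`coeff 0 F = 1` and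
`coeff (m+1) F = (u+u⁻¹) c_m(a) c_m(b) + c_{m+1}(a) c_{m+1}(b) + c_{m-1}(a) c_{m-1}(b)`. -/
theorem stmt_7 (R : Type*) [CommRing R] (u a b : Rˣ) :
    let F : PowerSeries R :=
      (1 - PowerSeries.X ^ 2) * (1 + PowerSeries.C (↑u : R) * PowerSeries.X) *
        (1 + PowerSeries.C (↑u⁻¹ : R) * PowerSeries.X) *
        PowerSeries.invOfUnit (1 - PowerSeries.C (↑(a * b) : R) * PowerSeries.X) 1 *
        PowerSeries.invOfUnit (1 - PowerSeries.C (↑(a * b⁻¹) : R) * PowerSeries.X) 1 *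
        PowerSeries.invOfUnit (1 - PowerSeries.C (↑(a⁻¹ * b) : R) * PowerSeries.X) 1 *
        PowerSeries.invOfUnit (1 - PowerSeries.C (↑(a⁻¹ * b⁻¹) : R) * PowerSeries.X) 1
    PowerSeries.coeff 0 F = 1 ∧
      ∀ m : ℕ, PowerSeries.coeff (m + 1) F =
        ((u : R) + (↑u⁻¹ : R)) * suCharU a (m : ℤ) * suCharU b (m : ℤ) +
          suCharU a ((m : ℤ) + 1) * suCharU b ((m : ℤ) + 1) +
          suCharU a ((m : ℤ) - 1) * suCharU b ((m : ℤ) - 1) := by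
  intro F
  open PowerSeries in
  have hF : F = (1 - X ^ 2) * (1 + C ((↑u : R)) * X) * (1 + C ((↑u⁻¹ : R)) * X) *
      mk (fun n => ((↑(a * b) : R)) ^ n) * mk (fun n => ((↑(a * b⁻¹) : R)) ^ n) *
      mk (fun n => ((↑(a⁻¹ * b) : R)) ^ n) * mk (fun n => ((↑(a⁻¹ * b⁻¹) : R)) ^ n) := by
    show (1 - X ^ 2) * (1 + C ((↑u : R)) * X) * (1 + C ((↑u⁻¹ : R)) * X) *
        invOfUnit (1 - C ((↑(a * b) : R)) * X) 1 * invOfUnit (1 - C ((↑(a * b⁻¹) : R)) * X) 1 *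
        invOfUnit (1 - C ((↑(a⁻¹ * b) : R)) * X) 1 * invOfUnit (1 - C ((↑(a⁻¹ * b⁻¹) : R)) * X) 1 = _
    rw [invOfUnit_geom, invOfUnit_geom, invOfUnit_geom, invOfUnit_geom]
  open PowerSeries in
  have hFG : F = mk (fun j => fF (R := R) u a b (j : ℤ)) := by
    have h1 := geom_mul ((↑(a * b) : R))
    have h2 := geom_mul ((↑(a * b⁻¹) : R))
    have h3 := geom_mul ((↑(a⁻¹ * b) : R))
    have h4 := geom_mul ((↑(a⁻¹ * b⁻¹) : R))
    have hDG := DG (R := R) u a b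
    have hu : C ((u : R)) * C (((u⁻¹ : Rˣ) : R)) = 1 := by
      rw [← map_mul]; norm_num
    have hN : (1 - X ^ 2) * (1 + C ((↑u : R)) * X) * (1 + C ((↑u⁻¹ : R)) * X)
        = 1 + C ((u : R) + ((u⁻¹ : Rˣ) : R)) * X
            - C ((u : R) + ((u⁻¹ : Rˣ) : R)) * X ^ 3 - X ^ 4 := by
      rw [map_add]
      linear_combination (X ^ 2 - X ^ 4 : PowerSeries R) * hu
    rw [hF]
    calc (1 - X ^ 2) * (1 + C ((↑u : R)) * X) * (1 + C ((↑u⁻¹ : R)) * X) *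
          mk (fun n => ((↑(a * b) : R)) ^ n) * mk (fun n => ((↑(a * b⁻¹) : R)) ^ n) *
          mk (fun n => ((↑(a⁻¹ * b) : R)) ^ n) * mk (fun n => ((↑(a⁻¹ * b⁻¹) : R)) ^ n)
        = ((1 - X ^ 2) * (1 + C ((↑u : R)) * X) * (1 + C ((↑u⁻¹ : R)) * X)) *
            (mk (fun n => ((↑(a * b) : R)) ^ n) * mk (fun n => ((↑(a * b⁻¹) : R)) ^ n) *
             mk (fun n => ((↑(a⁻¹ * b) : R)) ^ n) * mk (fun n => ((↑(a⁻¹ * b⁻¹) : R)) ^ n)) := by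
          ring
      _ = ((1 - C ((↑(a * b) : R)) * X) * (1 - C ((↑(a * b⁻¹) : R)) * X) *
            (1 - C ((↑(a⁻¹ * b) : R)) * X) * (1 - C ((↑(a⁻¹ * b⁻¹) : R)) * X) *
            mk (fun j => fF (R := R) u a b (j : ℤ))) *
            (mk (fun n => ((↑(a * b) : R)) ^ n) * mk (fun n => ((↑(a * b⁻¹) : R)) ^ n) *
             mk (fun n => ((↑(a⁻¹ * b) : R)) ^ n) * mk (fun n => ((↑(a⁻¹ * b⁻¹) : R)) ^ n)) := by
          rw [hN, hDG]
      _ = mk (fun j => fF (R := R) u a b (j : ℤ)) *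
            (((1 - C ((↑(a * b) : R)) * X) * mk (fun n => ((↑(a * b) : R)) ^ n)) *
             ((1 - C ((↑(a * b⁻¹) : R)) * X) * mk (fun n => ((↑(a * b⁻¹) : R)) ^ n)) *
             ((1 - C ((↑(a⁻¹ * b) : R)) * X) * mk (fun n => ((↑(a⁻¹ * b) : R)) ^ n)) *
             ((1 - C ((↑(a⁻¹ * b⁻¹) : R)) * X) * mk (fun n => ((↑(a⁻¹ * b⁻¹) : R)) ^ n))) := by
          ring
      _ = mk (fun j => fF (R := R) u a b (j : ℤ)) := by
          rw [h1, h2, h3, h4]; ring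
  constructor
  · rw [hFG, PowerSeries.coeff_mk]
    rw [show (((0 : ℕ) : ℤ)) = 0 from by norm_num, fF,
      gpAB_neg a b (by norm_num : (0 : ℤ) - 1 < 0),
      gpAB_neg a b (by norm_num : (0 : ℤ) - 2 < 0), gpAB, suCharU_zero, suCharU_zero]
    ring
  · intro m
    rw [hFG, PowerSeries.coeff_mk]
    rw [show (((m + 1 : ℕ) : ℤ)) = (m : ℤ) + 1 from by push_cast; ring, fF,
      show (m : ℤ) + 1 - 1 = (m : ℤ) from by ring,
      show (m : ℤ) + 1 - 2 = (m : ℤ) - 1 from by ring, gpAB, gpAB, gpAB]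
    ring
end

section
/- Let R be a commutative ring and let X assign to every partition ν (of any nonnegative integer) an element X(ν) ∈ R. Encode a partition μ of n as a finitely supported function μ : {1, 2, ...} → ℕ with Σ_i i·μ(i) = n, and for a finite set S of part-sizes with μ(i) ≥ 1 for all i ∈ S, let μ∖S denote the partition of n − Σ_{i∈S} i obtained from μ by decreasing μ(i) by one for each i ∈ S. Then for every n ≥ 0: Σ_{μ partition of n} Σ_{S ⊆ {i : μ(i) ≥ 1}} (−1)^{|S|} X(μ∖S) = Σ_{j=0}^{n} c_j · ( Σ_{ν partition of n−j} X(ν) ), where c_j = Σ_{l=0}^{j} (−1)^l p_d(j; l) and p_d(j; l) is the number of partitions of j into exactly l distinct positive parts. -/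
/-- `cEuler j = Σ_{l=0}^{j} (-1)^l p_d(j; l)`, the alternating count of partitions of `j`
into distinct parts, i.e. the `j`-th Taylor coefficient of the Euler function. -/
def cEuler (j : ℕ) : ℤ :=
  ∑ l ∈ Finset.range (j + 1),
    (-1 : ℤ) ^ l * (((Nat.Partition.distincts j).filter fun p => p.parts.card = l).card : ℤ)

lemma cEuler_eq (j : ℕ) :
    cEuler j = ∑ p ∈ Nat.Partition.distincts j, (-1 : ℤ) ^ p.parts.card := by
  have hmaps : ∀ p ∈ Nat.Partition.distincts j, p.parts.card ∈ Finset.range (j + 1) := by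
    intro p _
    rw [Finset.mem_range, Nat.lt_succ_iff]
    have : p.parts.card • 1 ≤ p.parts.sum :=
      Multiset.card_nsmul_le_sum fun x hx => p.parts_pos hx
    simpa [p.parts_sum] using this
  rw [cEuler, ← Finset.sum_fiberwise_of_maps_to hmaps (fun p => (-1 : ℤ) ^ p.parts.card)]
  refine Finset.sum_congr rfl fun l _ => ?_
  rw [Finset.sum_congr rfl (fun p hp => by rw [(Finset.mem_filter.mp hp).2])]
  rw [Finset.sum_const, nsmul_eq_mul, mul_comm]

lemma sub_finset_eq (m : Multiset ℕ) (S : Finset ℕ) :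
    Multiset.toFinsupp m - ∑ i ∈ S, Finsupp.single i 1 = Multiset.toFinsupp (m - S.val) := by
  ext a
  rw [Finsupp.tsub_apply, Multiset.toFinsupp_apply, Multiset.toFinsupp_apply,
    Multiset.count_sub, Finset.sum_apply']
  congr 1
  simp only [Finsupp.single_apply]
  rw [Finset.sum_ite_eq' S a (fun _ => 1)]
  by_cases h : a ∈ S
  · simp [h, Multiset.count_eq_one_of_mem S.nodup h]
  · simp [h, Multiset.count_eq_zero_of_notMem h]

lemma val_le_of_subset {S : Finset ℕ} {m : Multiset ℕ} (h : S ⊆ m.toFinset) : S.val ≤ m := by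
  rw [Multiset.le_iff_count]
  intro x
  by_cases hx : x ∈ S
  · rw [Multiset.count_eq_one_of_mem S.nodup hx]
    exact Multiset.one_le_count_iff_mem.mpr (Multiset.mem_toFinset.mp (h hx))
  · simp [Multiset.count_eq_zero_of_notMem hx]

lemma sigmaPart_ext {n : ℕ} (a b : Σ j : ℕ, Nat.Partition (n - j) × Nat.Partition j)
    (h1 : a.1 = b.1) (h2 : a.2.1.parts = b.2.1.parts) (h3 : a.2.2.parts = b.2.2.parts) :
    a = b := by
  obtain ⟨j, p, ν⟩ := a
  obtain ⟨j', p', ν'⟩ := b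
  dsimp only at h1
  subst h1
  dsimp only at h2 h3
  congr 1
  exact Prod.ext (Nat.Partition.ext h2) (Nat.Partition.ext h3)

lemma sigmaMu_ext {n : ℕ} (a b : Σ _ : Nat.Partition n, Finset ℕ)
    (h1 : a.1.parts = b.1.parts) (h2 : a.2 = b.2) : a = b := by
  obtain ⟨μ, S⟩ := a
  obtain ⟨μ', S'⟩ := b
  dsimp only at h1 h2
  subst h2
  congr 1
  exact Nat.Partition.ext h1

/-- forward map: (μ, S) ↦ (j = Σ S, partition with parts S, μ ∖ S). -/
def fwd {n : ℕ} (μ : Nat.Partition n) (S : Finset ℕ) (hS : S ⊆ μ.parts.toFinset) :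
    Σ j : ℕ, Nat.Partition (n - j) × Nat.Partition j :=
  ⟨S.sum id,
    (⟨μ.parts - S.val,
      fun {i} hi => μ.parts_pos (Multiset.mem_of_le (Multiset.sub_le_self _ _) hi), by
        have hle := val_le_of_subset hS
        have h := congrArg Multiset.sum (tsub_add_cancel_of_le hle)
        rw [Multiset.sum_add, μ.parts_sum] at h
        have h2 : S.sum id = S.val.sum := by rw [Finset.sum, Multiset.map_id]
        omega⟩,
     ⟨S.val, fun {i} hi => μ.parts_pos (Multiset.mem_of_le (val_le_of_subset hS) hi), by
        rw [Finset.sum, Multiset.map_id]⟩)⟩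

/-- backward map: (j, p, ν) ↦ (μ = ν + p, S = parts of p). -/
def bwd {n : ℕ} (j : ℕ) (ν : Nat.Partition (n - j)) (p : Nat.Partition j) (hj : j ≤ n) :
    Σ _ : Nat.Partition n, Finset ℕ :=
  ⟨⟨ν.parts + p.parts,
    fun {i} hi => by
      rcases Multiset.mem_add.mp hi with h | h
      exacts [ν.parts_pos h, p.parts_pos h], by
    rw [Multiset.sum_add, ν.parts_sum, p.parts_sum]; omega⟩,
   p.parts.toFinset⟩

/-- the combinatorial resummation.  Partitions `μ` of `n` are encoded as
finitely supported multiplicity functions `ℕ →₀ ℕ` (via `Multiset.toFinsupp` of the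
multiset of parts of a `Nat.Partition`); for a set `S` of part-sizes occurring in `μ`,
`μ∖S` is obtained from `μ` by decreasing the multiplicity of each `i ∈ S` by one.  Then
`Σ_{μ ⊢ n} Σ_{S ⊆ supp μ} (-1)^{|S|} X(μ∖S) = Σ_{j=0}^{n} c_j Σ_{ν ⊢ n-j} X(ν)`. -/
theorem stmt_11 (R : Type*) [CommRing R] (X : (ℕ →₀ ℕ) → R) (n : ℕ) :
    (∑ μ : Nat.Partition n, ∑ S ∈ (Multiset.toFinsupp μ.parts).support.powerset,
      (-1 : R) ^ S.card * X (Multiset.toFinsupp μ.parts - ∑ i ∈ S, Finsupp.single i 1)) =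
    ∑ j ∈ Finset.range (n + 1), (cEuler j : R) *
      ∑ ν : Nat.Partition (n - j), X (Multiset.toFinsupp ν.parts) := by
  have hc : ∀ j : ℕ, ((cEuler j : ℤ) : R)
      = ∑ p ∈ Nat.Partition.distincts j, (-1 : R) ^ p.parts.card := by
    intro j
    rw [cEuler_eq]
    push_cast
    rfl
  simp only [hc, Finset.sum_mul, Finset.mul_sum]
  rw [Finset.sum_sigma']
  simp only [← Finset.sum_product']
  rw [Finset.sum_sigma']
  refine Finset.sum_bij'
    (fun a ha => fwd a.1 a.2 (by
      have := (Finset.mem_sigma.mp ha).2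
      simpa [Multiset.toFinsupp_support] using Finset.mem_powerset.mp this))
    (fun b hb => bwd b.1 b.2.1 b.2.2 (by
      have := Finset.mem_range.mp (Finset.mem_sigma.mp hb).1
      omega))
    ?_ ?_ ?_ ?_ ?_
  · -- hi : fwd maps into target
    rintro ⟨μ, S⟩ ha
    have hS : S ⊆ μ.parts.toFinset := by
      have := (Finset.mem_sigma.mp ha).2
      simpa [Multiset.toFinsupp_support] using Finset.mem_powerset.mp this
    rw [Finset.mem_sigma]
    constructor
    · rw [Finset.mem_range, Nat.lt_succ_iff]
      have hle := val_le_of_subset hS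
      obtain ⟨u, hu⟩ := Multiset.le_iff_exists_add.mp hle
      have : S.sum id = S.val.sum := by rw [Finset.sum, Multiset.map_id]
      have h2 := congrArg Multiset.sum hu
      rw [Multiset.sum_add, μ.parts_sum] at h2
      simp only [fwd]
      omega
    · -- second component in product
      rw [Finset.mem_product]
      constructor
      · exact Finset.mem_univ _
      · simp only [fwd]
        exact Finset.mem_filter.mpr ⟨Finset.mem_univ _, S.nodup⟩
  · -- hj : bwd maps into source
    rintro ⟨j, ν, p⟩ hb
    rw [Finset.mem_sigma]
    refine ⟨Finset.mem_univ _, ?_⟩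
    rw [Finset.mem_powerset]
    intro a hamem
    simp only [bwd, Multiset.toFinsupp_support] at *
    rw [Multiset.mem_toFinset] at *
    exact Multiset.mem_add.mpr (Or.inr hamem)
  · -- left_inv
    rintro ⟨μ, S⟩ ha
    have hS : S ⊆ μ.parts.toFinset := by
      have := (Finset.mem_sigma.mp ha).2
      simpa [Multiset.toFinsupp_support] using Finset.mem_powerset.mp this
    apply sigmaMu_ext
    · show (μ.parts - S.val) + S.val = μ.parts
      exact tsub_add_cancel_of_le (val_le_of_subset hS)
    · show S.val.toFinset = S
      exact Finset.val_toFinset S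
  · -- right_inv
    rintro ⟨j, ν, p⟩ hb
    have hnd : p.parts.Nodup := by
      have := (Finset.mem_product.mp (Finset.mem_sigma.mp hb).2).2
      simpa [Nat.Partition.distincts, Finset.mem_filter] using this
    have hval : p.parts.toFinset.val = p.parts := by
      rw [Multiset.toFinset_val, Multiset.dedup_eq_self.mpr hnd]
    apply sigmaPart_ext
    · show p.parts.toFinset.sum id = j
      rw [Finset.sum, Multiset.map_id, hval, p.parts_sum]
    · show (ν.parts + p.parts) - p.parts.toFinset.val = ν.parts
      rw [hval, add_tsub_cancel_right]
    · show p.parts.toFinset.val = p.parts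
      exact hval
  · -- values agree
    rintro ⟨μ, S⟩ ha
    simp only [fwd]
    rw [sub_finset_eq]
    rfl
end

section
/- Let q, z be complex numbers with 0 < |q| < 1 and z ≠ 0. Then Σ_{k∈ℤ} z^k q^{k^2} = Σ_{m=0}^∞ ( q^{m^2} − q^{(m+1)^2} ) · ( Σ_{k=−m}^{m} z^k ), where both series converge absolutely. -/
open Filter Topology

/-- Ratio-test lemma: `a^n * b^(n^2)` is summable for `0 < a`, `0 < b < 1`. -/
lemma aux_summable_pow_sq {a b : ℝ} (ha : 0 < a) (hb0 : 0 < b) (hb1 : b < 1) :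
    Summable (fun n : ℕ => a ^ n * b ^ (n ^ 2)) := by
  apply summable_of_ratio_test_tendsto_lt_one (l := 0) one_pos
  · filter_upwards with n
    positivity
  · have key : ∀ n : ℕ, ‖a ^ (n+1) * b ^ ((n+1) ^ 2)‖ / ‖a ^ n * b ^ (n ^ 2)‖
        = a * b ^ (2 * n + 1) := by
      intro n
      have h1 : (0:ℝ) < a ^ n * b ^ (n ^ 2) := by positivity
      have h2 : (0:ℝ) ≤ a ^ (n+1) * b ^ ((n+1) ^ 2) := by positivity
      rw [Real.norm_of_nonneg h2, Real.norm_of_nonneg h1.le, div_eq_iff h1.ne',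
        show (n+1)^2 = n^2 + (2*n+1) by ring, pow_add]
      ring
    simp only [key]
    have : Tendsto (fun n : ℕ => a * b ^ (2 * n + 1)) atTop (𝓝 (a * 0)) := by
      apply Tendsto.const_mul
      have h0 : Tendsto (fun n : ℕ => b ^ n) atTop (𝓝 0) :=
        tendsto_pow_atTop_nhds_zero_of_lt_one hb0.le hb1
      exact h0.comp (tendsto_atTop_mono (fun n => by simp only [id_eq]; omega) tendsto_id)
    simpa using this

lemma aux_two_mul_add_one_le (m : ℕ) : (2 * m + 1 : ℝ) ≤ 3 ^ m := by
  induction m with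
  | zero => norm_num
  | succ n ih =>
    have h1 : (1:ℝ) ≤ 3 ^ n := one_le_pow₀ (by norm_num)
    push_cast [pow_succ] at *
    nlinarith

/-- for `0 < |q| < 1` and `z ≠ 0`,
`Σ_{k∈ℤ} z^k q^{k²} = Σ_{m=0}^∞ (q^{m²} - q^{(m+1)²}) Σ_{k=-m}^{m} z^k`,
both series converging absolutely. -/
theorem stmt_12 (q z : ℂ) (hq0 : 0 < ‖q‖) (hq1 : ‖q‖ < 1) (hz : z ≠ 0) :
    Summable (fun k : ℤ => ‖z ^ k * q ^ (k ^ 2)‖) ∧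
    Summable (fun m : ℕ => ‖(q ^ (m ^ 2) - q ^ ((m + 1) ^ 2)) *
      ∑ k ∈ Finset.Icc (-(m : ℤ)) (m : ℤ), z ^ k‖) ∧
    (∑' k : ℤ, z ^ k * q ^ (k ^ 2)) =
      ∑' m : ℕ, (q ^ (m ^ 2) - q ^ ((m + 1) ^ 2)) *
        ∑ k ∈ Finset.Icc (-(m : ℤ)) (m : ℤ), z ^ k := by
  have hq0' : 0 < ‖q‖ := by exact hq0
  have hq1' : ‖q‖ < 1 := by exact hq1
  have hqne : q ≠ 0 := by simpa using hq0'
  have hzn : 0 < ‖z‖ := norm_pos_iff.mpr hz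
  set M : ℝ := max ‖z‖ ‖z⁻¹‖ with hM
  have hM1 : 1 ≤ M := by
    rcases le_total ‖z‖ 1 with h | h
    · have : 1 ≤ ‖z⁻¹‖ := by
        rw [norm_inv]
        exact (one_le_inv₀ hzn).mpr h
      exact this.trans (le_max_right _ _)
    · exact h.trans (le_max_left _ _)
  have hM0 : 0 < M := lt_of_lt_of_le one_pos hM1
  -- bound on ‖z^k‖
  have zb : ∀ k : ℤ, ‖z ^ k‖ ≤ M ^ k.natAbs := by
    intro k
    rcases Int.natAbs_eq k with h | h
    · rw [h, zpow_natCast, norm_pow]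
      exact pow_le_pow_left₀ (norm_nonneg z) (le_max_left _ _) _
    · have : ‖z ^ k‖ = ‖z⁻¹‖ ^ k.natAbs := by
        conv_lhs => rw [h]
        rw [zpow_neg, ← inv_zpow, zpow_natCast, norm_pow]
      rw [this]
      exact pow_le_pow_left₀ (norm_nonneg _) (le_max_right _ _) _
  -- Conjunct 1
  have h1nat : Summable (fun n : ℕ => ‖z ^ ((n : ℤ)) * q ^ (((n : ℤ)) ^ 2)‖) := by
    apply (aux_summable_pow_sq hzn hq0' hq1').congr
    intro n
    rw [show ((n:ℤ))^2 = ((n^2 : ℕ) : ℤ) by push_cast; ring, zpow_natCast, zpow_natCast,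
      norm_mul, norm_pow, norm_pow]
  have h1neg : Summable (fun n : ℕ => ‖z ^ (-(n : ℤ)) * q ^ ((-(n : ℤ)) ^ 2)‖) := by
    have hzin : 0 < ‖z⁻¹‖ := by rw [norm_inv]; positivity
    apply (aux_summable_pow_sq hzin hq0' hq1').congr
    intro n
    rw [show (-(n:ℤ))^2 = ((n^2 : ℕ) : ℤ) by push_cast; ring, zpow_neg, ← inv_zpow,
      zpow_natCast, zpow_natCast, norm_mul, norm_pow, norm_pow]
  have S1 : Summable (fun k : ℤ => ‖z ^ k * q ^ (k ^ 2)‖) :=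
    Summable.of_nat_of_neg h1nat h1neg
  -- the common bound
  have hbound : ∀ m : ℕ, ∑ k ∈ Finset.Icc (-(m : ℤ)) (m : ℤ),
      ‖(q ^ (m ^ 2) - q ^ ((m + 1) ^ 2)) * z ^ k‖ ≤ 2 * ((3*M) ^ m * ‖q‖ ^ (m ^ 2)) := by
    intro m
    have hc : ‖q ^ (m ^ 2) - q ^ ((m + 1) ^ 2)‖ ≤ 2 * ‖q‖ ^ (m ^ 2) := by
      calc ‖q ^ (m ^ 2) - q ^ ((m + 1) ^ 2)‖ ≤ ‖q ^ (m^2)‖ + ‖q ^ ((m+1)^2)‖ :=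
            norm_sub_le _ _
        _ = ‖q‖ ^ (m^2) + ‖q‖ ^ ((m+1)^2) := by rw [norm_pow, norm_pow]
        _ ≤ ‖q‖ ^ (m^2) + ‖q‖ ^ (m^2) := by
            have := pow_le_pow_of_le_one hq0'.le hq1'.le
              (Nat.pow_le_pow_left (by omega) 2 : m ^ 2 ≤ (m+1) ^ 2)
            linarith
        _ = 2 * ‖q‖ ^ (m^2) := by ring
    calc ∑ k ∈ Finset.Icc (-(m : ℤ)) (m : ℤ), ‖(q ^ (m ^ 2) - q ^ ((m + 1) ^ 2)) * z ^ k‖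
        ≤ ∑ k ∈ Finset.Icc (-(m : ℤ)) (m : ℤ), (2 * ‖q‖ ^ (m^2)) * M ^ m := by
          apply Finset.sum_le_sum
          intro k hk
          rw [norm_mul]
          apply mul_le_mul hc ?_ (norm_nonneg _) (by positivity)
          refine (zb k).trans (pow_le_pow_right₀ hM1 ?_)
          simp only [Finset.mem_Icc] at hk
          omega
      _ = (2 * m + 1 : ℝ) * ((2 * ‖q‖ ^ (m^2)) * M ^ m) := by
          rw [Finset.sum_const, Int.card_Icc,
            show ((m:ℤ) + 1 - -(m:ℤ)).toNat = 2*m+1 by omega, nsmul_eq_mul]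
          push_cast; ring
      _ ≤ (3:ℝ) ^ m * ((2 * ‖q‖ ^ (m^2)) * M ^ m) := by
          apply mul_le_mul_of_nonneg_right (aux_two_mul_add_one_le m) (by positivity)
      _ = 2 * ((3*M) ^ m * ‖q‖ ^ (m ^ 2)) := by rw [mul_pow]; ring
  have hSb : Summable (fun m : ℕ => 2 * ((3*M) ^ m * ‖q‖ ^ (m ^ 2))) :=
    (aux_summable_pow_sq (by positivity) hq0' hq1').mul_left 2
  -- Conjunct 2
  have S2 : Summable (fun m : ℕ => ‖(q ^ (m ^ 2) - q ^ ((m + 1) ^ 2)) *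
      ∑ k ∈ Finset.Icc (-(m : ℤ)) (m : ℤ), z ^ k‖) := by
    apply Summable.of_nonneg_of_le (fun m => norm_nonneg _) ?_ hSb
    intro m
    calc ‖(q ^ (m ^ 2) - q ^ ((m + 1) ^ 2)) * ∑ k ∈ Finset.Icc (-(m : ℤ)) (m : ℤ), z ^ k‖
        = ‖∑ k ∈ Finset.Icc (-(m : ℤ)) (m : ℤ), (q ^ (m ^ 2) - q ^ ((m + 1) ^ 2)) * z ^ k‖ := by
          rw [Finset.mul_sum]
      _ ≤ ∑ k ∈ Finset.Icc (-(m : ℤ)) (m : ℤ), ‖(q ^ (m ^ 2) - q ^ ((m + 1) ^ 2)) * z ^ k‖ :=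
          norm_sum_le _ _
      _ ≤ 2 * ((3*M) ^ m * ‖q‖ ^ (m ^ 2)) := hbound m
  -- the double-sum family
  set F : ℕ × ℤ → ℂ := fun p =>
    if p.2.natAbs ≤ p.1 then (q ^ (p.1 ^ 2) - q ^ ((p.1 + 1) ^ 2)) * z ^ p.2 else 0 with hF
  have hFs : ∀ m : ℕ, ∀ k ∉ Finset.Icc (-(m : ℤ)) (m : ℤ), F (m, k) = 0 := by
    intro m k hk
    simp only [Finset.mem_Icc, not_and, not_le] at hk
    simp only [hF, ite_eq_right_iff]
    intro h
    exfalso; omega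
  have htsum_m : ∀ m : ℕ, ∑' k : ℤ, F (m, k) =
      (q ^ (m ^ 2) - q ^ ((m + 1) ^ 2)) * ∑ k ∈ Finset.Icc (-(m : ℤ)) (m : ℤ), z ^ k := by
    intro m
    rw [tsum_eq_sum (hFs m), Finset.mul_sum]
    apply Finset.sum_congr rfl
    intro k hk
    simp only [Finset.mem_Icc] at hk
    simp only [hF]
    rw [if_pos (by omega : k.natAbs ≤ m)]
  have hFnorm : Summable (fun p : ℕ × ℤ => ‖F p‖) := by
    apply (summable_prod_of_nonneg (fun p => norm_nonneg _)).mpr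
    constructor
    · intro m
      exact summable_of_ne_finset_zero (s := Finset.Icc (-(m : ℤ)) (m : ℤ))
        (fun k hk => by rw [hFs m k hk, norm_zero])
    · apply Summable.of_nonneg_of_le (fun m => tsum_nonneg (fun k => norm_nonneg _)) ?_ hSb
      intro m
      rw [tsum_eq_sum (s := Finset.Icc (-(m : ℤ)) (m : ℤ))
        (fun k hk => by rw [hFs m k hk, norm_zero])]
      refine le_trans (le_of_eq ?_) (hbound m)
      apply Finset.sum_congr rfl
      intro k hk
      simp only [Finset.mem_Icc] at hk
      simp only [hF]
      rw [if_pos (by omega : k.natAbs ≤ m)]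
  have hFsum : Summable F := hFnorm.of_norm
  -- fibrewise sums over m, for fixed k
  have hk_sum : ∀ k : ℤ, HasSum (fun m : ℕ => F (m, k)) (z ^ k * q ^ (k ^ 2)) := by
    intro k
    set N := k.natAbs with hN
    have hq2 : q ^ (k ^ 2) = q ^ ((N ^ 2 : ℕ) : ℤ) := by
      congr 1
      rw [hN, show ((k.natAbs ^ 2 : ℕ) : ℤ) = ((k^2).natAbs : ℤ) by rw [Int.natAbs_pow],
        Int.natAbs_of_nonneg (sq_nonneg k)]
    set a : ℕ → ℂ := fun m => q ^ ((m + N) ^ 2) with ha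
    have hnorm : Summable (fun m : ℕ => ‖(a m - a (m+1)) * z ^ k‖) := by
      apply Summable.of_nonneg_of_le (fun m => norm_nonneg _) ?_
        ((aux_summable_pow_sq one_pos hq0' hq1').mul_left (2 * M ^ N))
      intro m
      rw [norm_mul]
      have h1 : ‖a m - a (m+1)‖ ≤ 2 * ‖q‖ ^ (m ^ 2) := by
        calc ‖a m - a (m+1)‖ ≤ ‖a m‖ + ‖a (m+1)‖ := norm_sub_le _ _
          _ = ‖q‖ ^ ((m+N)^2) + ‖q‖ ^ ((m+1+N)^2) := by simp only [ha, norm_pow]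
          _ ≤ ‖q‖ ^ (m^2) + ‖q‖ ^ (m^2) :=
              add_le_add
                (pow_le_pow_of_le_one hq0'.le hq1'.le (Nat.pow_le_pow_left (by omega) 2))
                (pow_le_pow_of_le_one hq0'.le hq1'.le (Nat.pow_le_pow_left (by omega) 2))
          _ = 2 * ‖q‖ ^ (m^2) := by ring
      calc ‖a m - a (m+1)‖ * ‖z ^ k‖ ≤ (2 * ‖q‖ ^ (m^2)) * M ^ N := by
            exact mul_le_mul h1 (zb k) (norm_nonneg _) (by positivity)
        _ = 2 * M ^ N * (1 ^ m * ‖q‖ ^ (m ^ 2)) := by ring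
    have htend : Tendsto a atTop (𝓝 0) := by
      have hb : Tendsto (fun m : ℕ => ‖q‖ ^ m) atTop (𝓝 0) :=
        tendsto_pow_atTop_nhds_zero_of_lt_one hq0'.le hq1'
      apply squeeze_zero_norm _ hb
      intro m
      simp only [ha, norm_pow]
      exact pow_le_pow_of_le_one hq0'.le hq1'.le
        (le_trans (Nat.le_add_right m N) (Nat.le_self_pow two_ne_zero _))
    have htel : HasSum (fun m => (a m - a (m+1)) * z ^ k) (a 0 * z ^ k) := by
      rw [hasSum_iff_tendsto_nat_of_summable_norm hnorm]
      have hps : ∀ n : ℕ, ∑ i ∈ Finset.range n, (a i - a (i+1)) * z ^ k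
          = (a 0 - a n) * z ^ k := by
        intro n
        rw [← Finset.sum_mul, Finset.sum_range_sub' a n]
      simp only [hps]
      have h2 : Tendsto (fun n : ℕ => (a 0 - a n) * z ^ k) atTop
          (𝓝 ((a 0 - 0) * z ^ k)) :=
        (tendsto_const_nhds.sub htend).mul tendsto_const_nhds
      simpa using h2
    have hFshift : ∀ m : ℕ, F (m + N, k) = (a m - a (m+1)) * z ^ k := by
      intro m
      simp only [hF]
      rw [if_pos (by omega : k.natAbs ≤ m + N)]
      simp only [ha]
      rw [show m + 1 + N = m + N + 1 by ring]
    have hshift : HasSum (fun m : ℕ => F (m + N, k)) (a 0 * z ^ k) := by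
      simp only [hFshift]
      exact htel
    have hzero : ∑ i ∈ Finset.range N, F (i, k) = 0 := by
      apply Finset.sum_eq_zero
      intro i hi
      simp only [Finset.mem_range] at hi
      simp only [hF, ite_eq_right_iff]
      intro h
      exfalso; omega
    have hfinal : HasSum (fun m : ℕ => F (m, k)) (a 0 * z ^ k) := by
      apply (hasSum_nat_add_iff' N).mp
      rw [hzero, sub_zero]
      exact hshift
    have ha0 : a 0 * z ^ k = z ^ k * q ^ (k ^ 2) := by
      rw [mul_comm]
      congr 1
      simp only [ha, zero_add]
      rw [hq2, zpow_natCast]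
    rwa [ha0] at hfinal
  -- final chain
  refine ⟨S1, S2, ?_⟩
  calc (∑' k : ℤ, z ^ k * q ^ (k ^ 2)) = ∑' k : ℤ, ∑' m : ℕ, F (m, k) :=
        tsum_congr (fun k => ((hk_sum k).tsum_eq).symm)
    _ = ∑' m : ℕ, ∑' k : ℤ, F (m, k) := by
        exact Summable.tsum_comm' (f := fun (m : ℕ) (k : ℤ) => F (m, k)) hFsum
          (fun m => summable_of_ne_finset_zero
            (s := Finset.Icc (-(m : ℤ)) (m : ℤ)) (hFs m))
          (fun k => (hk_sum k).summable)
    _ = ∑' m : ℕ, (q ^ (m ^ 2) - q ^ ((m + 1) ^ 2)) *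
        ∑ k ∈ Finset.Icc (-(m : ℤ)) (m : ℤ), z ^ k := tsum_congr htsum_m
end

section
/- Let q, w be complex numbers with 0 < |q| < 1 and w ≠ 0. Then Σ_{k∈ℤ} w^{2k+1} q^{(2k+1)^2} = Σ_{m=0}^∞ ( q^{(2m+1)^2} − q^{(2m+3)^2} ) · ( Σ_{j=−m−1}^{m} w^{2j+1} ), where both series converge absolutely. -/
open Finset Filter Topology

private lemma zpow_le_max_pow {x : ℝ} (hx : 0 < x) {e : ℤ} {n : ℕ}
    (h : |e| ≤ (n : ℤ)) : x ^ e ≤ (max x x⁻¹) ^ n := by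
  set C := max x x⁻¹ with hC
  have hC1 : 1 ≤ C := by
    rcases le_total 1 x with h1 | h1
    · exact le_max_of_le_left h1
    · exact le_max_of_le_right ((one_le_inv₀ hx).mpr h1)
  have hxC : x ≤ C := le_max_left _ _
  have hxiC : x⁻¹ ≤ C := le_max_right _ _
  rcases le_or_gt 0 e with he | he
  · lift e to ℕ using he
    rw [zpow_natCast]
    calc x ^ e ≤ C ^ e := pow_le_pow_left₀ hx.le hxC e
      _ ≤ C ^ n := pow_le_pow_right₀ hC1 (by rw [abs_of_nonneg (by positivity)] at h; exact_mod_cast h)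
  · have hk : ((( -e).toNat : ℤ)) = -e := Int.toNat_of_nonneg (by omega)
    have hxe : x ^ e = x⁻¹ ^ ((-e).toNat) := by
      rw [← zpow_natCast x⁻¹, inv_zpow', hk, neg_neg]
    rw [hxe]
    calc x⁻¹ ^ ((-e).toNat) ≤ C ^ ((-e).toNat) := pow_le_pow_left₀ (by positivity) hxiC _
      _ ≤ C ^ n := pow_le_pow_right₀ hC1 (by rw [abs_of_neg he] at h; omega)

/-- for `0 < |q| < 1` and `w ≠ 0`,
`Σ_{k∈ℤ} w^{2k+1} q^{(2k+1)²}
  = Σ_{m=0}^∞ (q^{(2m+1)²} - q^{(2m+3)²}) Σ_{j=-m-1}^{m} w^{2j+1}`,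
both series converging absolutely. -/
theorem stmt_13 (q w : ℂ) (hq0 : 0 < ‖q‖) (hq1 : ‖q‖ < 1) (hw : w ≠ 0) :
    Summable (fun k : ℤ => ‖w ^ (2 * k + 1) * q ^ ((2 * k + 1) ^ 2)‖) ∧
    Summable (fun m : ℕ => ‖(q ^ ((2 * m + 1) ^ 2) - q ^ ((2 * m + 3) ^ 2)) *
      ∑ j ∈ Finset.Icc (-(m : ℤ) - 1) (m : ℤ), w ^ (2 * j + 1)‖) ∧
    (∑' k : ℤ, w ^ (2 * k + 1) * q ^ ((2 * k + 1) ^ 2)) =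
      ∑' m : ℕ, (q ^ ((2 * m + 1) ^ 2) - q ^ ((2 * m + 3) ^ 2)) *
        ∑ j ∈ Finset.Icc (-(m : ℤ) - 1) (m : ℤ), w ^ (2 * j + 1) := by
  have hq0' : (0:ℝ) < ‖q‖ := by exact hq0
  have hq1' : ‖q‖ < 1 := by exact hq1
  have hwpos : (0:ℝ) < ‖w‖ := norm_pos_iff.mpr hw
  set C : ℝ := max ‖w‖ ‖w‖⁻¹ with hCdef
  have hC1 : (1:ℝ) ≤ C := by
    rcases le_total 1 ‖w‖ with h1 | h1
    · exact le_max_of_le_left h1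
    · exact le_max_of_le_right ((one_le_inv₀ hwpos).mpr h1)
  have hC0 : (0:ℝ) < C := lt_of_lt_of_le one_pos hC1
  set a : ℕ → ℂ := fun m => q ^ ((2*m+1)^2) with ha
  have ha_succ : ∀ m : ℕ, a (m+1) = q ^ ((2*m+3)^2) := by
    intro m
    show q ^ ((2*(m+1)+1)^2) = q ^ ((2*m+3)^2)
    rw [show (2*(m+1)+1)^2 = (2*m+3)^2 from by ring]
  set F : ℤ → ℕ → ℂ := fun j m =>
    if -(m:ℤ) - 1 ≤ j ∧ j ≤ (m:ℤ) then w ^ (2*j+1) * (a m - a (m+1)) else 0 with hF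
  have hzero : ∀ (m : ℕ), ∀ j ∉ Finset.Icc (-(m:ℤ)-1) (m:ℤ), F j m = 0 := by
    intro m j hj
    rw [Finset.mem_Icc] at hj
    exact if_neg hj
  have hwbound : ∀ (m : ℕ), ∀ j ∈ Finset.Icc (-(m:ℤ)-1) (m:ℤ),
      ‖w ^ (2*j+1)‖ ≤ C ^ (2*m+1) := by
    intro m j hj
    rw [Finset.mem_Icc] at hj
    rw [norm_zpow]
    exact zpow_le_max_pow hwpos (by rw [abs_le]; push_cast; omega)
  have hd_bound : ∀ m : ℕ, ‖a m - a (m+1)‖ ≤ 2 * ‖q‖ ^ ((2*m+1)^2) := by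
    intro m
    calc ‖a m - a (m+1)‖ ≤ ‖a m‖ + ‖a (m+1)‖ := norm_sub_le _ _
      _ ≤ ‖q‖^((2*m+1)^2) + ‖q‖^((2*m+1)^2) := by
          rw [ha_succ]
          show ‖q ^ ((2*m+1)^2)‖ + _ ≤ _
          rw [norm_pow, norm_pow]
          have h2 : ‖q‖^((2*m+3)^2) ≤ ‖q‖^((2*m+1)^2) :=
            pow_le_pow_of_le_one (norm_nonneg q) hq1'.le (Nat.pow_le_pow_left (by omega) 2)
          linarith
      _ = 2 * ‖q‖^((2*m+1)^2) := by ring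
  set B : ℕ → ℝ := fun m => (2*(m:ℝ)+2) * (C^(2*m+1) * (2 * ‖q‖^((2*m+1)^2))) with hBdef
  have hB_pos : ∀ m, 0 < B m := by
    intro m
    have : (0:ℝ) < 2*(m:ℝ)+2 := by positivity
    positivity
  have hB : Summable B := by
    apply summable_of_ratio_norm_eventually_le (r := 1/2) (by norm_num)
    have h0 : Tendsto (fun m : ℕ => C^2 * ‖q‖^(8*m+8)) atTop (𝓝 0) := by
      have h1 : Tendsto (fun m : ℕ => C^2 * ‖q‖^m) atTop (𝓝 0) := by
        simpa using (tendsto_pow_atTop_nhds_zero_of_lt_one hq0'.le hq1').const_mul (C^2)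
      apply squeeze_zero (fun m => by positivity) (fun m => ?_) h1
      exact mul_le_mul_of_nonneg_left
        (pow_le_pow_of_le_one hq0'.le hq1'.le (by omega)) (by positivity)
    have hev : ∀ᶠ m : ℕ in atTop, C^2 * ‖q‖^(8*m+8) < 1/4 :=
      h0.eventually_lt_const (by norm_num)
    filter_upwards [hev] with m hm
    rw [Real.norm_of_nonneg (hB_pos (m+1)).le, Real.norm_of_nonneg (hB_pos m).le]
    have eB : B (m+1) = (2*(m:ℝ)+4) * (2 * ((C^2 * ‖q‖^(8*m+8)) *
        (C^(2*m+1) * ‖q‖^((2*m+1)^2)))) := by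
      have e2 : C^(2*(m+1)+1) = C^(2*m+1) * C^2 := by
        rw [show 2*(m+1)+1 = (2*m+1)+2 from by omega, pow_add]
      have e3 : ‖q‖^((2*(m+1)+1)^2) = ‖q‖^((2*m+1)^2) * ‖q‖^(8*m+8) := by
        rw [show (2*(m+1)+1)^2 = (2*m+1)^2 + (8*m+8) from by ring, pow_add]
      simp only [hBdef]
      rw [e2, e3]
      push_cast
      ring
    rw [eB]
    show _ ≤ 1/2 * ((2*(m:ℝ)+2) * (C^(2*m+1) * (2 * ‖q‖^((2*m+1)^2))))
    set u : ℝ := C^(2*m+1) * ‖q‖^((2*m+1)^2) with hu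
    set z : ℝ := C^2 * ‖q‖^(8*m+8) with hz
    have hu0 : (0:ℝ) ≤ u := by positivity
    have hz0 : (0:ℝ) ≤ z := by positivity
    have hm0 : (0:ℝ) ≤ (m:ℝ) := Nat.cast_nonneg m
    nlinarith [mul_nonneg hm0 hu0,
      mul_le_mul_of_nonneg_left hm.le (mul_nonneg (by linarith : (0:ℝ) ≤ 2*(m:ℝ)+4) hu0)]
  have hcard : ∀ m : ℕ, (Finset.Icc (-(m:ℤ)-1) (m:ℤ)).card = 2*m+2 := by
    intro m
    rw [Int.card_Icc]
    omega
  have hrowsum_le : ∀ m : ℕ, ∑ j ∈ Finset.Icc (-(m:ℤ)-1) (m:ℤ), ‖F j m‖ ≤ B m := by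
    intro m
    calc ∑ j ∈ Finset.Icc (-(m:ℤ)-1) (m:ℤ), ‖F j m‖
        ≤ ∑ _j ∈ Finset.Icc (-(m:ℤ)-1) (m:ℤ), (C^(2*m+1) * (2*‖q‖^((2*m+1)^2))) := by
          apply Finset.sum_le_sum
          intro j hj
          have hj' := Finset.mem_Icc.mp hj
          show ‖if -(m:ℤ) - 1 ≤ j ∧ j ≤ (m:ℤ) then w ^ (2*j+1) * (a m - a (m+1)) else 0‖ ≤ _
          rw [if_pos hj', norm_mul]
          exact mul_le_mul (hwbound m j hj) (hd_bound m) (norm_nonneg _) (by positivity)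
      _ = B m := by
          rw [Finset.sum_const, hcard m, nsmul_eq_mul]
          push_cast
          ring
  have hrow_m : ∀ m : ℕ, Summable fun j : ℤ => ‖F j m‖ := by
    intro m
    apply summable_of_ne_finset_zero (s := Finset.Icc (-(m:ℤ)-1) (m:ℤ))
    intro j hj
    rw [hzero m j hj, norm_zero]
  have htsum_row : ∀ m : ℕ, ∑' j : ℤ, ‖F j m‖ = ∑ j ∈ Finset.Icc (-(m:ℤ)-1) (m:ℤ), ‖F j m‖ := by
    intro m
    exact tsum_eq_sum (fun j hj => by rw [hzero m j hj, norm_zero])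
  have hFnorm' : Summable (fun p : ℕ × ℤ => ‖F p.2 p.1‖) := by
    rw [summable_prod_of_nonneg (fun p => norm_nonneg _)]
    refine ⟨fun m => hrow_m m, ?_⟩
    apply Summable.of_nonneg_of_le (fun m => tsum_nonneg fun j => norm_nonneg _) (fun m => ?_) hB
    rw [htsum_row m]
    exact hrowsum_le m
  have hFnorm : Summable (fun p : ℤ × ℕ => ‖F p.1 p.2‖) := hFnorm'.prod_symm
  have hFs : Summable (Function.uncurry F) := Summable.of_norm hFnorm
  have ha0 : Tendsto a atTop (𝓝 (0:ℂ)) := by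
    rw [tendsto_zero_iff_norm_tendsto_zero]
    apply squeeze_zero (fun n => norm_nonneg _) (fun n => ?_)
      (tendsto_pow_atTop_nhds_zero_of_lt_one hq0'.le hq1')
    show ‖q ^ ((2*n+1)^2)‖ ≤ ‖q‖ ^ n
    rw [norm_pow]
    exact pow_le_pow_of_le_one (norm_nonneg q) hq1'.le (by nlinarith)
  have htele : ∀ j : ℤ, HasSum (fun m => F j m) (w ^ (2*j+1) * q ^ ((2*j+1)^2)) := by
    intro j
    set M : ℕ := (max j (-j-1)).toNat with hMdef
    have hcond : ∀ m : ℕ, ((-(m:ℤ)-1 ≤ j ∧ j ≤ (m:ℤ)) ↔ M ≤ m) := by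
      intro m
      constructor
      · rintro ⟨h1, h2⟩
        rw [hMdef]
        exact Int.toNat_le.mpr (max_le h2 (by omega))
      · intro h
        have h' := Int.toNat_le.mp h
        exact ⟨by have := le_of_max_le_right h'; omega, le_of_max_le_left h'⟩
    have hq2 : q ^ ((2*j+1)^2) = a M := by
      have hM2 : ((2*M+1 : ℕ) : ℤ) = 2*j+1 ∨ ((2*M+1:ℕ) : ℤ) = -(2*j+1) := by
        rcases le_total (-j-1) j with h | h
        · left
          have hmax : max j (-j-1) = j := max_eq_left h
          rw [hMdef, hmax]
          push_cast [Int.toNat_of_nonneg (by omega : (0:ℤ) ≤ j)]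
          ring
        · right
          have hmax : max j (-j-1) = -j-1 := max_eq_right h
          rw [hMdef, hmax]
          push_cast [Int.toNat_of_nonneg (by omega : (0:ℤ) ≤ -j-1)]
          ring
      have he : (((2*M+1)^2 : ℕ) : ℤ) = (2*j+1)^2 := by
        push_cast
        rcases hM2 with h | h <;> push_cast at h <;> rw [h]
        all_goals ring
      show q ^ ((2*j+1)^2 : ℤ) = q ^ ((2*M+1)^2 : ℕ)
      rw [← zpow_natCast q ((2*M+1)^2), he]
    have hFsum : Summable (fun m => F j m) := hFs.prod_factor j
    obtain ⟨s, hs⟩ := hFsum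
    have hps := hs.tendsto_sum_nat
    have hiteq : ∀ i : ℕ, F j i = if M ≤ i then w^(2*j+1) * (a i - a (i+1)) else 0 := by
      intro i
      show (if -(i:ℤ) - 1 ≤ j ∧ j ≤ (i:ℤ) then _ else 0) = _
      rw [if_congr (hcond i) rfl rfl]
    have hfilter : ∀ n : ℕ, Finset.filter (fun i => M ≤ i) (Finset.range n) = Finset.Ico M n := by
      intro n
      ext i
      simp only [Finset.mem_filter, Finset.mem_range, Finset.mem_Ico]
      omega
    have hteq : ∀ᶠ n in atTop, ∑ i ∈ Finset.range n, F j i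
        = w^(2*j+1) * a M - w^(2*j+1) * a n := by
      filter_upwards [eventually_ge_atTop M] with n hn
      calc ∑ i ∈ Finset.range n, F j i
          = ∑ i ∈ Finset.filter (fun i => M ≤ i) (Finset.range n), (w^(2*j+1) * (a i - a (i+1))) := by
            rw [Finset.sum_filter]
            exact Finset.sum_congr rfl fun i _ => hiteq i
        _ = w^(2*j+1) * ∑ i ∈ Finset.Ico M n, (a i - a (i+1)) := by
            rw [hfilter n, Finset.mul_sum]
        _ = w^(2*j+1) * (a M - a n) := by
            rw [Finset.sum_Ico_eq_sub _ hn, Finset.sum_range_sub' a, Finset.sum_range_sub' a]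
            ring_nf
        _ = w^(2*j+1) * a M - w^(2*j+1) * a n := by ring
    have hlim : Tendsto (fun n => ∑ i ∈ Finset.range n, F j i) atTop
        (𝓝 (w ^ (2*j+1) * a M)) := by
      rw [tendsto_congr' hteq]
      simpa using tendsto_const_nhds.sub (ha0.const_mul (w^(2*j+1)))
    have hsM : s = w ^ (2*j+1) * a M := tendsto_nhds_unique hps hlim
    rw [hq2]
    rwa [hsM] at hs
  have hcol : ∀ m : ℕ, ∑' j : ℤ, F j m = (q^((2*m+1)^2) - q^((2*m+3)^2)) *
      ∑ j ∈ Finset.Icc (-(m:ℤ)-1) (m:ℤ), w ^ (2*j+1) := by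
    intro m
    rw [tsum_eq_sum (hzero m)]
    have : ∀ j ∈ Finset.Icc (-(m:ℤ)-1) (m:ℤ), F j m = w ^ (2*j+1) * (a m - a (m+1)) := by
      intro j hj
      exact if_pos (Finset.mem_Icc.mp hj)
    rw [Finset.sum_congr rfl this, ← Finset.sum_mul, mul_comm, ha_succ]
  refine ⟨?_, ?_, ?_⟩
  · have hrows2 := (summable_prod_of_nonneg (f := fun p : ℤ × ℕ => ‖F p.1 p.2‖)
      (fun p => norm_nonneg _)).mp hFnorm
    apply Summable.of_nonneg_of_le (fun k => norm_nonneg _) (fun k => ?_) hrows2.2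
    calc ‖w ^ (2*k+1) * q ^ ((2*k+1)^2)‖ = ‖∑' m : ℕ, F k m‖ := by rw [(htele k).tsum_eq]
      _ ≤ ∑' m : ℕ, ‖F k m‖ := norm_tsum_le_tsum_norm (hrows2.1 k)
  · apply Summable.of_nonneg_of_le (fun m => norm_nonneg _) (fun m => ?_) hB
    calc ‖(q^((2*m+1)^2) - q^((2*m+3)^2)) * ∑ j ∈ Finset.Icc (-(m:ℤ)-1) (m:ℤ), w ^ (2*j+1)‖
        = ‖∑' j : ℤ, F j m‖ := by rw [hcol m]
      _ ≤ ∑' j : ℤ, ‖F j m‖ := norm_tsum_le_tsum_norm (hrow_m m)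
      _ = ∑ j ∈ Finset.Icc (-(m:ℤ)-1) (m:ℤ), ‖F j m‖ := htsum_row m
      _ ≤ B m := hrowsum_le m
  · calc (∑' k : ℤ, w ^ (2*k+1) * q ^ ((2*k+1)^2))
        = ∑' (j : ℤ) (m : ℕ), F j m := tsum_congr fun j => ((htele j).tsum_eq).symm
      _ = ∑' (m : ℕ) (j : ℤ), F j m := (hFs.tsum_comm).symm
      _ = _ := tsum_congr hcol
end

section
/- Let q be a real number with 0 < q < 1 and let j1, j2, j3 be real numbers. Then Σ_{n=0}^∞ Σ_{m=0}^∞ (−1)^{n+m} q^{m(m+4j1+1)/2 + j1 + mn + n/2} (1 − q^{2m+1}) · Σ_{k=0}^{⌊n/2⌋} ( q^{(j2−n/2+k)^2} − q^{(j2+n/2−k+1)^2} )( q^{(j3−n/2+k)^2} − q^{(j3+n/2−k+1)^2} ) = Σ_{n=0}^∞ Σ_{m=0}^∞ (−1)^{n+m} q^{m(m+4j1+2n+1)/2 + j1 + n/2} ( q^{(j2−n/2)^2} − q^{(j2+n/2+1)^2} )( q^{(j3−n/2)^2} − q^{(j3+n/2+1)^2} ), where both iterated series converge absolutely. -/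
open Real

private lemma geo_rpow_summable {q : ℝ} (hq0 : 0 < q) (hq1 : q < 1) (a : ℝ) (ha : 0 < a) :
    Summable (fun n : ℕ => q ^ ((n : ℝ) * a)) := by
  have h : (fun n : ℕ => q ^ ((n : ℝ) * a)) = fun n : ℕ => (q ^ a) ^ n := by
    funext n
    rw [mul_comm, Real.rpow_mul hq0.le, Real.rpow_natCast]
  rw [h]
  exact summable_geometric_of_lt_one (Real.rpow_nonneg hq0.le a)
    (Real.rpow_lt_one hq0.le hq1 ha)

private lemma quad_rpow_summable {q : ℝ} (hq0 : 0 < q) (hq1 : q < 1) (c : ℝ) :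
    Summable (fun m : ℕ => q ^ (((m : ℝ) * ((m : ℝ) + c)) / 2)) := by
  have key : Summable (fun m : ℕ => q ^ ((m : ℝ) - (c - 2) ^ 2 / 8)) := by
    have h : (fun m : ℕ => q ^ ((m : ℝ) - (c - 2) ^ 2 / 8))
        = fun m : ℕ => q ^ ((m : ℝ) * 1) * (q ^ ((c - 2) ^ 2 / 8))⁻¹ := by
      funext m
      rw [Real.rpow_sub hq0, mul_one, div_eq_mul_inv]
    rw [h]
    exact (geo_rpow_summable hq0 hq1 1 one_pos).mul_right _
  refine Summable.of_nonneg_of_le (fun m => (Real.rpow_pos_of_pos hq0 _).le)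
    (fun m => Real.rpow_le_rpow_of_exponent_ge hq0 hq1.le ?_) key
  nlinarith [sq_nonneg ((m : ℝ) + (c - 2) / 2)]

/-- the exponent appearing (twice) in the statement -/
private noncomputable def Eexp (j1 : ℝ) (n m : ℕ) : ℝ :=
  ((m : ℝ) * ((m : ℝ) + 4 * j1 + 1)) / 2 + j1 + (m : ℝ) * (n : ℝ) + (n : ℝ) / 2

private noncomputable def Ssgn (q j1 : ℝ) (n m : ℕ) : ℝ :=
  (-1) ^ (n + m) * q ^ Eexp j1 n m

private noncomputable def Fq (q j x : ℝ) : ℝ :=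
  q ^ ((j - x / 2) ^ 2) - q ^ ((j + x / 2 + 1) ^ 2)

private noncomputable def FF (q j2 j3 x : ℝ) : ℝ := Fq q j2 x * Fq q j3 x

private lemma Fq_shift (q j : ℝ) (n k : ℕ) :
    Fq q j ((n : ℝ) - 2 * k) =
      q ^ ((j - (n : ℝ) / 2 + (k : ℝ)) ^ 2) - q ^ ((j + (n : ℝ) / 2 - (k : ℝ) + 1) ^ 2) := by
  unfold Fq
  rw [show j - ((n : ℝ) - 2 * (k : ℝ)) / 2 = j - (n : ℝ) / 2 + (k : ℝ) by ring,
    show j + ((n : ℝ) - 2 * (k : ℝ)) / 2 + 1 = j + (n : ℝ) / 2 - (k : ℝ) + 1 by ring]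

private lemma Fq_abs {q : ℝ} (hq0 : 0 < q) (hq1 : q < 1) (j x : ℝ) : |Fq q j x| ≤ 1 := by
  have h1 := Real.rpow_le_one hq0.le hq1.le (sq_nonneg (j - x / 2))
  have h2 := Real.rpow_le_one hq0.le hq1.le (sq_nonneg (j + x / 2 + 1))
  have p1 := (Real.rpow_pos_of_pos hq0 ((j - x / 2) ^ 2)).le
  have p2 := (Real.rpow_pos_of_pos hq0 ((j + x / 2 + 1) ^ 2)).le
  rw [Fq, abs_le]
  constructor <;> linarith

private lemma FF_abs {q : ℝ} (hq0 : 0 < q) (hq1 : q < 1) (j2 j3 x : ℝ) :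
    |FF q j2 j3 x| ≤ 1 := by
  have h1 := Fq_abs hq0 hq1 j2 x
  have h2 := Fq_abs hq0 hq1 j3 x
  have n1 := abs_nonneg (Fq q j2 x)
  have n2 := abs_nonneg (Fq q j3 x)
  rw [FF, abs_mul]
  nlinarith

private lemma Ssgn_shift {q : ℝ} (hq0 : 0 < q) (j1 : ℝ) (n m k : ℕ) :
    Ssgn q j1 (n + 2 * k) m = Ssgn q j1 n m * (q ^ (2 * m + 1)) ^ k := by
  unfold Ssgn
  have hE : Eexp j1 (n + 2 * k) m = Eexp j1 n m + ((2 * m + 1 : ℕ) : ℝ) * (k : ℝ) := by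
    unfold Eexp; push_cast; ring
  have hsgn : ((-1 : ℝ)) ^ (n + 2 * k + m) = (-1) ^ (n + m) := by
    rw [show n + 2 * k + m = (n + m) + 2 * k by omega, pow_add, pow_mul]
    norm_num
  rw [hE, Real.rpow_add hq0, hsgn, Real.rpow_mul hq0.le, Real.rpow_natCast,
    Real.rpow_natCast]
  ring

private noncomputable def Uaux (q j1 j2 j3 : ℝ) (x : (ℕ × ℕ) × ℕ) : ℝ :=
  if x.2 ≤ x.1.1 / 2 then
    Ssgn q j1 x.1.1 x.1.2 * (1 - q ^ (2 * x.1.2 + 1)) *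
      FF q j2 j3 ((x.1.1 : ℝ) - 2 * x.2)
  else 0

private def iMap (x : (ℕ × ℕ) × ℕ) : (ℕ × ℕ) × ℕ := ((x.1.1 + 2 * x.2, x.1.2), x.2)

private lemma iMap_inj : Function.Injective iMap := by
  rintro ⟨⟨n, m⟩, k⟩ ⟨⟨n', m'⟩, k'⟩ h
  simp only [iMap, Prod.mk.injEq] at h
  obtain ⟨⟨h1, h2⟩, h3⟩ := h
  refine Prod.ext (Prod.ext ?_ ?_) ?_ <;> simp <;> omega

set_option maxHeartbeats 4000000 in
/-- the final resummation in the computation of the branching functions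
`ψ̃^K` of the free OSP(4|2) Gross–Neveu boundary partition function: for `0 < q < 1`
and real `j1, j2, j3`,
`Σ_{n,m≥0} (-1)^{n+m} q^{m(m+4j1+1)/2 + j1 + mn + n/2} (1-q^{2m+1})
   Σ_{k=0}^{⌊n/2⌋} (q^{(j2-n/2+k)²} - q^{(j2+n/2-k+1)²})(q^{(j3-n/2+k)²} - q^{(j3+n/2-k+1)²})
 = Σ_{n,m≥0} (-1)^{n+m} q^{m(m+4j1+2n+1)/2 + j1 + n/2}
   (q^{(j2-n/2)²} - q^{(j2+n/2+1)²})(q^{(j3-n/2)²} - q^{(j3+n/2+1)²})`,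
both iterated series converging absolutely (real powers of `q`). -/
theorem stmt_16 (q : ℝ) (hq0 : 0 < q) (hq1 : q < 1) (j1 j2 j3 : ℝ) :
    Summable (fun x : ℕ × ℕ => |(-1 : ℝ) ^ (x.1 + x.2) *
      q ^ (((x.2 : ℝ) * ((x.2 : ℝ) + 4 * j1 + 1)) / 2 + j1 + (x.2 : ℝ) * (x.1 : ℝ) +
        (x.1 : ℝ) / 2) * (1 - q ^ (2 * x.2 + 1)) *
      ∑ k ∈ Finset.range (x.1 / 2 + 1),
        ((q ^ ((j2 - (x.1 : ℝ) / 2 + (k : ℝ)) ^ 2) -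
            q ^ ((j2 + (x.1 : ℝ) / 2 - (k : ℝ) + 1) ^ 2)) *
          (q ^ ((j3 - (x.1 : ℝ) / 2 + (k : ℝ)) ^ 2) -
            q ^ ((j3 + (x.1 : ℝ) / 2 - (k : ℝ) + 1) ^ 2)))|) ∧
    Summable (fun x : ℕ × ℕ => |(-1 : ℝ) ^ (x.1 + x.2) *
      q ^ (((x.2 : ℝ) * ((x.2 : ℝ) + 4 * j1 + 2 * (x.1 : ℝ) + 1)) / 2 + j1 + (x.1 : ℝ) / 2) *
      ((q ^ ((j2 - (x.1 : ℝ) / 2) ^ 2) - q ^ ((j2 + (x.1 : ℝ) / 2 + 1) ^ 2)) *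
        (q ^ ((j3 - (x.1 : ℝ) / 2) ^ 2) - q ^ ((j3 + (x.1 : ℝ) / 2 + 1) ^ 2)))|) ∧
    (∑' n : ℕ, ∑' m : ℕ, (-1 : ℝ) ^ (n + m) *
      q ^ (((m : ℝ) * ((m : ℝ) + 4 * j1 + 1)) / 2 + j1 + (m : ℝ) * (n : ℝ) + (n : ℝ) / 2) *
      (1 - q ^ (2 * m + 1)) *
      ∑ k ∈ Finset.range (n / 2 + 1),
        ((q ^ ((j2 - (n : ℝ) / 2 + (k : ℝ)) ^ 2) -
            q ^ ((j2 + (n : ℝ) / 2 - (k : ℝ) + 1) ^ 2)) *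
          (q ^ ((j3 - (n : ℝ) / 2 + (k : ℝ)) ^ 2) -
            q ^ ((j3 + (n : ℝ) / 2 - (k : ℝ) + 1) ^ 2)))) =
    ∑' n : ℕ, ∑' m : ℕ, (-1 : ℝ) ^ (n + m) *
      q ^ (((m : ℝ) * ((m : ℝ) + 4 * j1 + 2 * (n : ℝ) + 1)) / 2 + j1 + (n : ℝ) / 2) *
      ((q ^ ((j2 - (n : ℝ) / 2) ^ 2) - q ^ ((j2 + (n : ℝ) / 2 + 1) ^ 2)) *
        (q ^ ((j3 - (n : ℝ) / 2) ^ 2) - q ^ ((j3 + (n : ℝ) / 2 + 1) ^ 2))) := by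
  -- basic facts
  have hq0' : (0:ℝ) ≤ q := hq0.le
  have hEb : ∀ n m : ℕ, q ^ Eexp j1 n m ≤
      q ^ j1 * q ^ ((n : ℝ) * (1/2)) * q ^ (((m : ℝ) * ((m : ℝ) + 4 * j1 + 1)) / 2) := by
    intro n m
    rw [← Real.rpow_add hq0, ← Real.rpow_add hq0]
    refine Real.rpow_le_rpow_of_exponent_ge hq0 hq1.le ?_
    have h1 : (0:ℝ) ≤ (m : ℝ) * (n : ℝ) := by positivity
    unfold Eexp; nlinarith
  -- the summable majorant on pairs, with an extra (n+1) factor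
  have hg : Summable (fun m : ℕ => q ^ (((m : ℝ) * ((m : ℝ) + 4 * j1 + 1)) / 2)) := by
    have := quad_rpow_summable hq0 hq1 (4 * j1 + 1)
    have heq : (fun m : ℕ => q ^ (((m : ℝ) * ((m : ℝ) + (4 * j1 + 1))) / 2))
        = fun m : ℕ => q ^ (((m : ℝ) * ((m : ℝ) + 4 * j1 + 1)) / 2) := by
      funext m; congr 1; ring
    rwa [heq] at this
  have hf1 : Summable (fun n : ℕ => q ^ j1 * (((n : ℝ) + 1) * q ^ ((n : ℝ) * (1/2)))) := by
    have hr0 : (0:ℝ) ≤ q ^ ((1:ℝ)/2) := Real.rpow_nonneg hq0' _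
    have hr1 : q ^ ((1:ℝ)/2) < 1 := Real.rpow_lt_one hq0' hq1 (by norm_num)
    have h1 : Summable (fun n : ℕ => (n : ℝ) ^ 1 * (q ^ ((1:ℝ)/2)) ^ n) :=
      summable_pow_mul_geometric_of_norm_lt_one 1 (by rwa [Real.norm_eq_abs, abs_of_nonneg hr0])
    have h2 : Summable (fun n : ℕ => (q ^ ((1:ℝ)/2)) ^ n) :=
      summable_geometric_of_lt_one hr0 hr1
    have h3 : Summable (fun n : ℕ => ((n : ℝ) + 1) * (q ^ ((1:ℝ)/2)) ^ n) := by
      have := h1.add h2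
      have heq : (fun n : ℕ => ((n : ℝ) + 1) * (q ^ ((1:ℝ)/2)) ^ n)
          = fun n : ℕ => (n : ℝ) ^ 1 * (q ^ ((1:ℝ)/2)) ^ n + (q ^ ((1:ℝ)/2)) ^ n := by
        funext n; ring
      rwa [heq]
    have heq : (fun n : ℕ => ((n : ℝ) + 1) * q ^ ((n : ℝ) * (1/2)))
        = fun n : ℕ => ((n : ℝ) + 1) * (q ^ ((1:ℝ)/2)) ^ n := by
      funext n
      rw [mul_comm (n:ℝ) (1/2 : ℝ), Real.rpow_mul hq0', Real.rpow_natCast]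
    exact (by rwa [heq] : Summable fun n : ℕ => ((n:ℝ)+1) * q ^ ((n:ℝ) * (1/2))).mul_left _
  have hmaj : Summable (fun x : ℕ × ℕ =>
      (q ^ j1 * (((x.1 : ℝ) + 1) * q ^ ((x.1 : ℝ) * (1/2)))) *
        q ^ (((x.2 : ℝ) * ((x.2 : ℝ) + 4 * j1 + 1)) / 2)) :=
    Summable.mul_of_nonneg hf1 hg (fun n => by positivity)
      (fun m => (Real.rpow_pos_of_pos hq0 _).le)
  have hCabs : ∀ m : ℕ, |1 - q ^ (2 * m + 1)| ≤ 1 := by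
    intro m
    have h1 : (0:ℝ) < q ^ (2 * m + 1) := pow_pos hq0 _
    have h2 : q ^ (2 * m + 1) < 1 := pow_lt_one₀ hq0' hq1 (by omega)
    rw [abs_le]; constructor <;> linarith
  -- first summability
  have conj1 : Summable (fun x : ℕ × ℕ => |(-1 : ℝ) ^ (x.1 + x.2) *
      q ^ (((x.2 : ℝ) * ((x.2 : ℝ) + 4 * j1 + 1)) / 2 + j1 + (x.2 : ℝ) * (x.1 : ℝ) +
        (x.1 : ℝ) / 2) * (1 - q ^ (2 * x.2 + 1)) *
      ∑ k ∈ Finset.range (x.1 / 2 + 1),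
        ((q ^ ((j2 - (x.1 : ℝ) / 2 + (k : ℝ)) ^ 2) -
            q ^ ((j2 + (x.1 : ℝ) / 2 - (k : ℝ) + 1) ^ 2)) *
          (q ^ ((j3 - (x.1 : ℝ) / 2 + (k : ℝ)) ^ 2) -
            q ^ ((j3 + (x.1 : ℝ) / 2 - (k : ℝ) + 1) ^ 2)))|) := by
    refine Summable.of_nonneg_of_le (fun x => abs_nonneg _) ?_ hmaj
    rintro ⟨n, m⟩
    have hD : |∑ k ∈ Finset.range (n / 2 + 1),
        ((q ^ ((j2 - (n : ℝ) / 2 + (k : ℝ)) ^ 2) -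
            q ^ ((j2 + (n : ℝ) / 2 - (k : ℝ) + 1) ^ 2)) *
          (q ^ ((j3 - (n : ℝ) / 2 + (k : ℝ)) ^ 2) -
            q ^ ((j3 + (n : ℝ) / 2 - (k : ℝ) + 1) ^ 2)))| ≤ (n : ℝ) + 1 := by
      calc _ ≤ ∑ k ∈ Finset.range (n / 2 + 1),
          |((q ^ ((j2 - (n : ℝ) / 2 + (k : ℝ)) ^ 2) -
              q ^ ((j2 + (n : ℝ) / 2 - (k : ℝ) + 1) ^ 2)) *
            (q ^ ((j3 - (n : ℝ) / 2 + (k : ℝ)) ^ 2) -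
              q ^ ((j3 + (n : ℝ) / 2 - (k : ℝ) + 1) ^ 2)))| := Finset.abs_sum_le_sum_abs _ _
        _ ≤ (Finset.range (n / 2 + 1)).card • (1:ℝ) := by
            refine Finset.sum_le_card_nsmul _ _ _ (fun k _ => ?_)
            rw [← Fq_shift q j2 n k, ← Fq_shift q j3 n k]
            exact FF_abs hq0 hq1 j2 j3 _
        _ ≤ (n : ℝ) + 1 := by
            rw [Finset.card_range, nsmul_eq_mul, mul_one]
            have : (n / 2 + 1 : ℕ) ≤ n + 1 := by omega
            calc ((n / 2 + 1 : ℕ) : ℝ) ≤ ((n + 1 : ℕ) : ℝ) := by exact_mod_cast this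
              _ = (n : ℝ) + 1 := by push_cast; ring
    calc |(-1 : ℝ) ^ (n + m) *
        q ^ (((m : ℝ) * ((m : ℝ) + 4 * j1 + 1)) / 2 + j1 + (m : ℝ) * (n : ℝ) + (n : ℝ) / 2) *
        (1 - q ^ (2 * m + 1)) *
        ∑ k ∈ Finset.range (n / 2 + 1),
        ((q ^ ((j2 - (n : ℝ) / 2 + (k : ℝ)) ^ 2) -
            q ^ ((j2 + (n : ℝ) / 2 - (k : ℝ) + 1) ^ 2)) *
          (q ^ ((j3 - (n : ℝ) / 2 + (k : ℝ)) ^ 2) -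
            q ^ ((j3 + (n : ℝ) / 2 - (k : ℝ) + 1) ^ 2)))|
        = q ^ Eexp j1 n m * |1 - q ^ (2 * m + 1)| *
          |∑ k ∈ Finset.range (n / 2 + 1),
          ((q ^ ((j2 - (n : ℝ) / 2 + (k : ℝ)) ^ 2) -
              q ^ ((j2 + (n : ℝ) / 2 - (k : ℝ) + 1) ^ 2)) *
            (q ^ ((j3 - (n : ℝ) / 2 + (k : ℝ)) ^ 2) -
              q ^ ((j3 + (n : ℝ) / 2 - (k : ℝ) + 1) ^ 2)))| := by
          rw [abs_mul, abs_mul, abs_mul, abs_pow, abs_neg, abs_one, one_pow, one_mul,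
            abs_of_pos (Real.rpow_pos_of_pos hq0 _)]
          rfl
      _ ≤ (q ^ j1 * q ^ ((n : ℝ) * (1/2)) *
            q ^ (((m : ℝ) * ((m : ℝ) + 4 * j1 + 1)) / 2)) * 1 * ((n : ℝ) + 1) := by
          have h1 := hEb n m
          have h2 := hCabs m
          gcongr
      _ = (q ^ j1 * (((n : ℝ) + 1) * q ^ ((n : ℝ) * (1/2)))) *
            q ^ (((m : ℝ) * ((m : ℝ) + 4 * j1 + 1)) / 2) := by ring
  -- second summability
  have hmaj2 : Summable (fun x : ℕ × ℕ =>
      (q ^ j1 * q ^ ((x.1 : ℝ) * (1/2))) * q ^ (((x.2 : ℝ) * ((x.2 : ℝ) + 4 * j1 + 1)) / 2)) :=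
    Summable.mul_of_nonneg ((geo_rpow_summable hq0 hq1 (1/2) (by norm_num)).mul_left _) hg
      (fun n => by positivity) (fun m => (Real.rpow_pos_of_pos hq0 _).le)
  have hE2 : ∀ n m : ℕ,
      ((m : ℝ) * ((m : ℝ) + 4 * j1 + 2 * (n : ℝ) + 1)) / 2 + j1 + (n : ℝ) / 2
        = Eexp j1 n m := by
    intro n m; unfold Eexp; ring
  have conj2 : Summable (fun x : ℕ × ℕ => |(-1 : ℝ) ^ (x.1 + x.2) *
      q ^ (((x.2 : ℝ) * ((x.2 : ℝ) + 4 * j1 + 2 * (x.1 : ℝ) + 1)) / 2 + j1 + (x.1 : ℝ) / 2) *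
      ((q ^ ((j2 - (x.1 : ℝ) / 2) ^ 2) - q ^ ((j2 + (x.1 : ℝ) / 2 + 1) ^ 2)) *
        (q ^ ((j3 - (x.1 : ℝ) / 2) ^ 2) - q ^ ((j3 + (x.1 : ℝ) / 2 + 1) ^ 2)))|) := by
    refine Summable.of_nonneg_of_le (fun x => abs_nonneg _) ?_ hmaj2
    rintro ⟨n, m⟩
    have hFFn : |(q ^ ((j2 - (n : ℝ) / 2) ^ 2) - q ^ ((j2 + (n : ℝ) / 2 + 1) ^ 2)) *
        (q ^ ((j3 - (n : ℝ) / 2) ^ 2) - q ^ ((j3 + (n : ℝ) / 2 + 1) ^ 2))| ≤ 1 :=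
      FF_abs hq0 hq1 j2 j3 (n : ℝ)
    calc |(-1 : ℝ) ^ (n + m) *
        q ^ (((m : ℝ) * ((m : ℝ) + 4 * j1 + 2 * (n : ℝ) + 1)) / 2 + j1 + (n : ℝ) / 2) *
        ((q ^ ((j2 - (n : ℝ) / 2) ^ 2) - q ^ ((j2 + (n : ℝ) / 2 + 1) ^ 2)) *
          (q ^ ((j3 - (n : ℝ) / 2) ^ 2) - q ^ ((j3 + (n : ℝ) / 2 + 1) ^ 2)))|
        = q ^ Eexp j1 n m *
          |(q ^ ((j2 - (n : ℝ) / 2) ^ 2) - q ^ ((j2 + (n : ℝ) / 2 + 1) ^ 2)) *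
            (q ^ ((j3 - (n : ℝ) / 2) ^ 2) - q ^ ((j3 + (n : ℝ) / 2 + 1) ^ 2))| := by
          rw [hE2 n m, abs_mul, abs_mul, abs_pow, abs_neg, abs_one, one_pow, one_mul,
            abs_of_pos (Real.rpow_pos_of_pos hq0 _)]
      _ ≤ (q ^ j1 * q ^ ((n : ℝ) * (1/2)) *
            q ^ (((m : ℝ) * ((m : ℝ) + 4 * j1 + 1)) / 2)) * 1 := by
          have h1 := hEb n m
          gcongr
      _ = (q ^ j1 * q ^ ((n : ℝ) * (1/2))) *
            q ^ (((m : ℝ) * ((m : ℝ) + 4 * j1 + 1)) / 2) := by ring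
  refine ⟨conj1, conj2, ?_⟩
  have hsum1 := summable_abs_iff.mp conj1
  have hsum2 := summable_abs_iff.mp conj2
  -- structured forms
  have hT1 : ∀ x : ℕ × ℕ, (-1 : ℝ) ^ (x.1 + x.2) *
      q ^ (((x.2 : ℝ) * ((x.2 : ℝ) + 4 * j1 + 1)) / 2 + j1 + (x.2 : ℝ) * (x.1 : ℝ) +
        (x.1 : ℝ) / 2) * (1 - q ^ (2 * x.2 + 1)) *
      (∑ k ∈ Finset.range (x.1 / 2 + 1),
        ((q ^ ((j2 - (x.1 : ℝ) / 2 + (k : ℝ)) ^ 2) -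
            q ^ ((j2 + (x.1 : ℝ) / 2 - (k : ℝ) + 1) ^ 2)) *
          (q ^ ((j3 - (x.1 : ℝ) / 2 + (k : ℝ)) ^ 2) -
            q ^ ((j3 + (x.1 : ℝ) / 2 - (k : ℝ) + 1) ^ 2))))
      = Ssgn q j1 x.1 x.2 * (1 - q ^ (2 * x.2 + 1)) *
        ∑ k ∈ Finset.range (x.1 / 2 + 1), FF q j2 j3 ((x.1 : ℝ) - 2 * k) := by
    rintro ⟨n, m⟩
    have hs : (∑ k ∈ Finset.range (n / 2 + 1), FF q j2 j3 ((n : ℝ) - 2 * k))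
        = ∑ k ∈ Finset.range (n / 2 + 1),
          ((q ^ ((j2 - (n : ℝ) / 2 + (k : ℝ)) ^ 2) -
              q ^ ((j2 + (n : ℝ) / 2 - (k : ℝ) + 1) ^ 2)) *
            (q ^ ((j3 - (n : ℝ) / 2 + (k : ℝ)) ^ 2) -
              q ^ ((j3 + (n : ℝ) / 2 - (k : ℝ) + 1) ^ 2))) :=
      Finset.sum_congr rfl fun k _ => by
        unfold FF
        rw [Fq_shift, Fq_shift]
    rw [hs]
    rfl
  have hT2 : ∀ x : ℕ × ℕ, (-1 : ℝ) ^ (x.1 + x.2) *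
      q ^ (((x.2 : ℝ) * ((x.2 : ℝ) + 4 * j1 + 2 * (x.1 : ℝ) + 1)) / 2 + j1 + (x.1 : ℝ) / 2) *
      ((q ^ ((j2 - (x.1 : ℝ) / 2) ^ 2) - q ^ ((j2 + (x.1 : ℝ) / 2 + 1) ^ 2)) *
        (q ^ ((j3 - (x.1 : ℝ) / 2) ^ 2) - q ^ ((j3 + (x.1 : ℝ) / 2 + 1) ^ 2)))
      = Ssgn q j1 x.1 x.2 * FF q j2 j3 (x.1 : ℝ) := by
    rintro ⟨n, m⟩
    rw [hE2 n m]
    rfl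
  -- T1 as a tsum over k
  have hU_T1 : ∀ p : ℕ × ℕ, Ssgn q j1 p.1 p.2 * (1 - q ^ (2 * p.2 + 1)) *
      (∑ k ∈ Finset.range (p.1 / 2 + 1), FF q j2 j3 ((p.1 : ℝ) - 2 * k))
      = ∑' k : ℕ, Uaux q j1 j2 j3 (p, k) := by
    rintro ⟨n, m⟩
    rw [tsum_eq_sum (s := Finset.range (n / 2 + 1))
      (fun k hk => by
        simp only [Uaux]
        rw [if_neg (by simpa [Nat.lt_succ_iff] using hk)])]
    rw [Finset.mul_sum]
    refine Finset.sum_congr rfl fun k hk => ?_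
    simp only [Uaux]
    rw [if_pos (by simpa [Nat.lt_succ_iff] using hk : k ≤ n / 2)]
  -- summability of Uaux
  have hUsum : Summable (Uaux q j1 j2 j3) := by
    rw [← summable_abs_iff]
    have hin : Summable (fun p : ℕ × ℕ => (q ^ j1 * q ^ ((p.1 : ℝ) * (1/4))) *
        q ^ (((p.2 : ℝ) * ((p.2 : ℝ) + 4 * j1 + 1)) / 2)) := by
      refine Summable.mul_of_nonneg ((geo_rpow_summable hq0 hq1 (1/4) (by norm_num)).mul_left _)
        hg (fun n => ?_) (fun m => (Real.rpow_pos_of_pos hq0 _).le)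
      positivity
    have hmaj3 : Summable (fun x : (ℕ × ℕ) × ℕ =>
        ((q ^ j1 * q ^ ((x.1.1 : ℝ) * (1/4))) *
          q ^ (((x.1.2 : ℝ) * ((x.1.2 : ℝ) + 4 * j1 + 1)) / 2)) *
          q ^ ((x.2 : ℝ) * (1/2))) := by
      refine Summable.mul_of_nonneg hin (geo_rpow_summable hq0 hq1 (1/2) (by norm_num))
        (fun p => ?_) (fun k => (Real.rpow_pos_of_pos hq0 _).le)
      positivity
    refine Summable.of_nonneg_of_le (fun x => abs_nonneg _) ?_ hmaj3
    rintro ⟨⟨n, m⟩, k⟩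
    simp only [Uaux]
    split_ifs with h
    · have hk2 : 2 * k ≤ n := by omega
      have hkr : 2 * (k : ℝ) ≤ (n : ℝ) := by exact_mod_cast hk2
      have hmn : (0:ℝ) ≤ (m : ℝ) * (n : ℝ) := by positivity
      have hstep : q ^ Eexp j1 n m ≤
          ((q ^ j1 * q ^ ((n : ℝ) * (1/4))) *
            q ^ (((m : ℝ) * ((m : ℝ) + 4 * j1 + 1)) / 2)) * q ^ ((k : ℝ) * (1/2)) := by
        rw [← Real.rpow_add hq0, ← Real.rpow_add hq0, ← Real.rpow_add hq0]
        refine Real.rpow_le_rpow_of_exponent_ge hq0 hq1.le ?_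
        unfold Eexp
        nlinarith
      calc |Ssgn q j1 n m * (1 - q ^ (2 * m + 1)) * FF q j2 j3 ((n : ℝ) - 2 * k)|
          = q ^ Eexp j1 n m * |1 - q ^ (2 * m + 1)| * |FF q j2 j3 ((n : ℝ) - 2 * k)| := by
            unfold Ssgn
            rw [abs_mul, abs_mul, abs_mul, abs_pow, abs_neg, abs_one, one_pow, one_mul,
              abs_of_pos (Real.rpow_pos_of_pos hq0 _)]
        _ ≤ q ^ Eexp j1 n m * 1 * 1 := by
            have h1 := hCabs m
            have h2 := FF_abs hq0 hq1 j2 j3 ((n : ℝ) - 2 * k)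
            gcongr
        _ = q ^ Eexp j1 n m := by ring
        _ ≤ _ := hstep
    · simp only [abs_zero]
      positivity
  have hsupp : ∀ x ∉ Set.range iMap, Uaux q j1 j2 j3 x = 0 := by
    rintro ⟨⟨n, m⟩, k⟩ hx
    simp only [Uaux]
    split_ifs with h
    · exfalso
      apply hx
      refine ⟨((n - 2 * k, m), k), ?_⟩
      simp only [iMap]
      have hn : n - 2 * k + 2 * k = n := by omega
      rw [hn]
    · rfl
  have hsupp' : Function.support (Uaux q j1 j2 j3) ⊆ Set.range iMap :=
    Function.support_subset_iff'.mpr hsupp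
  have hcomp : ∀ x : (ℕ × ℕ) × ℕ, Uaux q j1 j2 j3 (iMap x) =
      (Ssgn q j1 x.1.1 x.1.2 * FF q j2 j3 (x.1.1 : ℝ) * (1 - q ^ (2 * x.1.2 + 1))) *
        (q ^ (2 * x.1.2 + 1)) ^ x.2 := by
    rintro ⟨⟨n, m⟩, k⟩
    simp only [iMap, Uaux]
    split_ifs with hk
    · rw [Ssgn_shift hq0 j1 n m k,
        (by push_cast; ring : ((n + 2 * k : ℕ) : ℝ) - 2 * (k : ℝ) = (n : ℝ))]
      ring_nf
      exact if_pos (by omega)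
    · exact absurd (by omega : k ≤ (n + 2 * k) / 2) hk
  have hVsum : Summable (fun x : (ℕ × ℕ) × ℕ =>
      (Ssgn q j1 x.1.1 x.1.2 * FF q j2 j3 (x.1.1 : ℝ) * (1 - q ^ (2 * x.1.2 + 1))) *
        (q ^ (2 * x.1.2 + 1)) ^ x.2) := by
    have h := (iMap_inj.summable_iff hsupp).mpr hUsum
    rwa [(funext hcomp : Uaux q j1 j2 j3 ∘ iMap = _)] at h
  have hgeo_k : ∀ n m : ℕ, (∑' k : ℕ,
      (Ssgn q j1 n m * FF q j2 j3 (n : ℝ) * (1 - q ^ (2 * m + 1))) * (q ^ (2 * m + 1)) ^ k)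
      = Ssgn q j1 n m * FF q j2 j3 (n : ℝ) := by
    intro n m
    have hlt : q ^ (2 * m + 1) < 1 := pow_lt_one₀ hq0' hq1 (by omega)
    have hpos : (0:ℝ) < 1 - q ^ (2 * m + 1) := by linarith
    rw [tsum_mul_left, tsum_geometric_of_lt_one (pow_pos hq0 _).le hlt]
    exact mul_inv_cancel_right₀ hpos.ne' _
  have key : (∑' x : ℕ × ℕ, (-1 : ℝ) ^ (x.1 + x.2) *
      q ^ (((x.2 : ℝ) * ((x.2 : ℝ) + 4 * j1 + 1)) / 2 + j1 + (x.2 : ℝ) * (x.1 : ℝ) +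
        (x.1 : ℝ) / 2) * (1 - q ^ (2 * x.2 + 1)) *
      ∑ k ∈ Finset.range (x.1 / 2 + 1),
        ((q ^ ((j2 - (x.1 : ℝ) / 2 + (k : ℝ)) ^ 2) -
            q ^ ((j2 + (x.1 : ℝ) / 2 - (k : ℝ) + 1) ^ 2)) *
          (q ^ ((j3 - (x.1 : ℝ) / 2 + (k : ℝ)) ^ 2) -
            q ^ ((j3 + (x.1 : ℝ) / 2 - (k : ℝ) + 1) ^ 2))))
      = ∑' x : ℕ × ℕ, (-1 : ℝ) ^ (x.1 + x.2) *
      q ^ (((x.2 : ℝ) * ((x.2 : ℝ) + 4 * j1 + 2 * (x.1 : ℝ) + 1)) / 2 + j1 + (x.1 : ℝ) / 2) *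
      ((q ^ ((j2 - (x.1 : ℝ) / 2) ^ 2) - q ^ ((j2 + (x.1 : ℝ) / 2 + 1) ^ 2)) *
        (q ^ ((j3 - (x.1 : ℝ) / 2) ^ 2) - q ^ ((j3 + (x.1 : ℝ) / 2 + 1) ^ 2))) := by
    calc _ = ∑' x : ℕ × ℕ, Ssgn q j1 x.1 x.2 * (1 - q ^ (2 * x.2 + 1)) *
          ∑ k ∈ Finset.range (x.1 / 2 + 1), FF q j2 j3 ((x.1 : ℝ) - 2 * k) :=
        tsum_congr hT1
      _ = ∑' x : ℕ × ℕ, ∑' k : ℕ, Uaux q j1 j2 j3 (x, k) := tsum_congr hU_T1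
      _ = ∑' y : (ℕ × ℕ) × ℕ, Uaux q j1 j2 j3 y := (Summable.tsum_prod hUsum).symm
      _ = ∑' y : (ℕ × ℕ) × ℕ, Uaux q j1 j2 j3 (iMap y) := (iMap_inj.tsum_eq hsupp').symm
      _ = ∑' y : (ℕ × ℕ) × ℕ,
          (Ssgn q j1 y.1.1 y.1.2 * FF q j2 j3 (y.1.1 : ℝ) * (1 - q ^ (2 * y.1.2 + 1))) *
            (q ^ (2 * y.1.2 + 1)) ^ y.2 := tsum_congr hcomp
      _ = ∑' x : ℕ × ℕ, ∑' k : ℕ,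
          (Ssgn q j1 x.1 x.2 * FF q j2 j3 (x.1 : ℝ) * (1 - q ^ (2 * x.2 + 1))) *
            (q ^ (2 * x.2 + 1)) ^ k := Summable.tsum_prod hVsum
      _ = ∑' x : ℕ × ℕ, Ssgn q j1 x.1 x.2 * FF q j2 j3 (x.1 : ℝ) :=
        tsum_congr (fun x => hgeo_k x.1 x.2)
      _ = _ := (tsum_congr hT2).symm
  exact (Summable.tsum_prod hsum1).symm.trans (key.trans (Summable.tsum_prod hsum2))
end
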